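/- arXiv:2001.09790 — 7 statements merged into one kernel-verified Lean document; each statement's English description precedes it below -/
import Mathlib

section
/- Legendre's relation: for every k ∈ (0,1), K'(k)·E(k) + K(k)·E'(k) − K(k)·K'(k) = π/2. -/
open Real MeasureTheory intervalIntegral Set Filter Metric
open scoped Topology Interval

/-- Complete elliptic integral of the first kind. -/
noncomputable def ellK (k : ℝ) : ℝ :=
  ∫ θ in (0:ℝ)..(π/2), 1 / Real.sqrt (1 - k^2 * Real.sin θ ^ 2)

/-- Complete elliptic integral of the second kind. -/
noncomputable def ellE (k : ℝ) : ℝ :=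
  ∫ θ in (0:ℝ)..(π/2), Real.sqrt (1 - k^2 * Real.sin θ ^ 2)

/-- Complementary complete elliptic integral of the first kind. -/
noncomputable def ellK' (k : ℝ) : ℝ := ellK (Real.sqrt (1 - k^2))

/-- Complementary complete elliptic integral of the second kind. -/
noncomputable def ellE' (k : ℝ) : ℝ := ellE (Real.sqrt (1 - k^2))

/-! ### Basic facts -/

lemma g_pos {k : ℝ} (hk : k^2 < 1) (θ : ℝ) : 0 < 1 - k^2 * Real.sin θ ^ 2 := by
  nlinarith [Real.sin_sq_le_one θ, sq_nonneg k, sq_nonneg (k * Real.sin θ)]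

lemma cont_sqrtg (k : ℝ) : Continuous fun θ : ℝ => Real.sqrt (1 - k^2 * Real.sin θ ^ 2) := by
  fun_prop

lemma cont_inv_sqrtg {k : ℝ} (hk : k^2 < 1) :
    Continuous fun θ : ℝ => 1 / Real.sqrt (1 - k^2 * Real.sin θ ^ 2) := by
  apply continuous_const.div (cont_sqrtg k)
  intro θ; exact (Real.sqrt_pos.2 (g_pos hk θ)).ne'

lemma cont_inv_g_sqrtg {k : ℝ} (hk : k^2 < 1) :
    Continuous fun θ : ℝ =>
      1 / ((1 - k^2 * Real.sin θ ^ 2) * Real.sqrt (1 - k^2 * Real.sin θ ^ 2)) := by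
  apply continuous_const.div (by fun_prop)
  intro θ; exact (mul_pos (g_pos hk θ) (Real.sqrt_pos.2 (g_pos hk θ))).ne'

/-! ### Pointwise derivatives in the modulus -/

lemma hasDerivAt_g (θ x : ℝ) :
    HasDerivAt (fun k : ℝ => 1 - k^2 * Real.sin θ ^ 2) (-(2*x) * Real.sin θ ^ 2) x := by
  have h : HasDerivAt (fun k : ℝ => k^2) (2*x) x := by simpa using hasDerivAt_pow 2 x
  simpa [neg_mul] using ((h.mul_const (Real.sin θ ^ 2)).const_sub 1)

lemma hasDerivAt_sqrtg (θ : ℝ) {x : ℝ} (hx : x^2 < 1) :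
    HasDerivAt (fun k : ℝ => Real.sqrt (1 - k^2 * Real.sin θ ^ 2))
      (-(x * Real.sin θ ^ 2) / Real.sqrt (1 - x^2 * Real.sin θ ^ 2)) x := by
  have h := (Real.hasDerivAt_sqrt (g_pos hx θ).ne').comp x (hasDerivAt_g θ x)
  refine h.congr_deriv ?_
  field_simp

lemma hasDerivAt_inv_sqrtg (θ : ℝ) {x : ℝ} (hx : x^2 < 1) :
    HasDerivAt (fun k : ℝ => 1 / Real.sqrt (1 - k^2 * Real.sin θ ^ 2))
      (x * Real.sin θ ^ 2 /
        ((1 - x^2 * Real.sin θ ^ 2) * Real.sqrt (1 - x^2 * Real.sin θ ^ 2))) x := by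
  have hs : (0:ℝ) < Real.sqrt (1 - x^2 * Real.sin θ ^ 2) := Real.sqrt_pos.2 (g_pos hx θ)
  have h := (hasDerivAt_sqrtg θ hx).inv hs.ne'
  have hsq : Real.sqrt (1 - x^2 * Real.sin θ ^ 2) ^ 2 = 1 - x^2 * Real.sin θ ^ 2 :=
    Real.sq_sqrt (g_pos hx θ).le
  refine HasDerivAt.congr_deriv (h.congr_of_eventuallyEq (Filter.Eventually.of_forall fun k => ?_)) ?_
  · simp [one_div]
  · rw [hsq]
    field_simp

/-! ### FTC identity: `∫ 1/Δ³ = E/(1-k²)` -/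

lemma hasDerivAt_Phi {k : ℝ} (hk : k^2 < 1) (θ : ℝ) :
    HasDerivAt (fun θ => Real.sin θ * Real.cos θ / Real.sqrt (1 - k^2 * Real.sin θ ^ 2))
      ((1 - 2*Real.sin θ^2 + k^2 * Real.sin θ^4) /
        ((1 - k^2*Real.sin θ^2) * Real.sqrt (1 - k^2*Real.sin θ^2))) θ := by
  have hg := g_pos hk θ
  have hs : (0:ℝ) < Real.sqrt (1 - k^2 * Real.sin θ ^ 2) := Real.sqrt_pos.2 hg
  have hsq : Real.sqrt (1 - k^2 * Real.sin θ ^ 2) ^ 2 = 1 - k^2 * Real.sin θ ^ 2 :=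
    Real.sq_sqrt hg.le
  have hnum : HasDerivAt (fun θ => Real.sin θ * Real.cos θ)
      (Real.cos θ^2 - Real.sin θ^2) θ := by
    have := (Real.hasDerivAt_sin θ).mul (Real.hasDerivAt_cos θ)
    refine this.congr_deriv ?_; ring
  have hgθ : HasDerivAt (fun θ : ℝ => 1 - k^2 * Real.sin θ ^ 2)
      (-(k^2 * (2 * Real.sin θ * Real.cos θ))) θ := by
    have h2 : HasDerivAt (fun θ : ℝ => Real.sin θ ^ 2)
        (2 * Real.sin θ * Real.cos θ) θ := by
      exact (by simpa using (Real.hasDerivAt_sin θ).pow 2 : HasDerivAt (Real.sin ^ 2) (2 * Real.sin θ * Real.cos θ) θ)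
    simpa [neg_mul, mul_assoc] using (h2.const_mul (k^2)).const_sub 1
  have hsqθ := (Real.hasDerivAt_sqrt hg.ne').comp θ hgθ
  have hdiv := hnum.div hsqθ hs.ne'
  refine hdiv.congr_deriv ?_
  simp only [Function.comp_apply]
  rw [div_eq_div_iff (by positivity) (by positivity)]
  have hc : Real.cos θ ^ 2 = 1 - Real.sin θ ^ 2 := Real.cos_sq' θ
  generalize Real.sqrt (1 - k^2 * Real.sin θ ^ 2) = s at hs hsq ⊢
  field_simp
  linear_combination ((Real.cos θ^2 - Real.sin θ^2)*(1 - k^2*Real.sin θ^2) - (1 - 2*Real.sin θ^2 + k^2*Real.sin θ^4)) * hsq + (1 - k^2*Real.sin θ^2) * hc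

lemma integral_inv_g_sqrtg {k : ℝ} (hk : k^2 < 1) :
    ∫ θ in (0:ℝ)..(π/2),
        1 / ((1 - k^2 * Real.sin θ ^ 2) * Real.sqrt (1 - k^2 * Real.sin θ ^ 2)) =
      ellE k / (1 - k^2) := by
  have hk1 : (0:ℝ) < 1 - k^2 := by linarith
  set f : ℝ → ℝ := fun θ =>
    1 / ((1 - k^2 * Real.sin θ ^ 2) * Real.sqrt (1 - k^2 * Real.sin θ ^ 2)) -
      Real.sqrt (1 - k^2 * Real.sin θ ^ 2) / (1 - k^2) with hf
  have hderiv : ∀ θ ∈ Set.uIcc (0:ℝ) (π/2),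
      HasDerivAt (fun θ => -(k^2/(1-k^2)) *
        (Real.sin θ * Real.cos θ / Real.sqrt (1 - k^2 * Real.sin θ ^ 2))) (f θ) θ := by
    intro θ _
    have h := (hasDerivAt_Phi hk θ).const_mul (-(k^2/(1-k^2)))
    refine h.congr_deriv ?_
    have hg := g_pos hk θ
    have hs : (0:ℝ) < Real.sqrt (1 - k^2 * Real.sin θ ^ 2) := Real.sqrt_pos.2 hg
    have hsq : Real.sqrt (1 - k^2 * Real.sin θ ^ 2) ^ 2 = 1 - k^2 * Real.sin θ ^ 2 :=
      Real.sq_sqrt hg.le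
    rw [hf]
    field_simp
    ring_nf
    linear_combination (Real.sqrt (1 - k^2*Real.sin θ^2) * (2*k^2*Real.sin θ^2 - 2*k^4*Real.sin θ^2 - k^4*Real.sin θ^4 + k^6*Real.sin θ^4) + Real.sqrt (1 - k^2*Real.sin θ^2) * (k^2 - 1) + (1-k^2)*(1-k^2*Real.sin θ^2)^2*Real.sqrt (1 - k^2*Real.sin θ^2) + (1-k^2*Real.sin θ^2)) * hsq
  have hint : IntervalIntegrable f volume 0 (π/2) := by
    apply Continuous.intervalIntegrable
    exact (cont_inv_g_sqrtg hk).sub ((cont_sqrtg k).div_const _)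
  have h0 := intervalIntegral.integral_eq_sub_of_hasDerivAt hderiv hint
  simp [Real.sin_pi_div_two, Real.cos_pi_div_two, Real.sin_zero] at h0
  have hsplit : ∫ θ in (0:ℝ)..(π/2), f θ =
      (∫ θ in (0:ℝ)..(π/2),
        1 / ((1 - k^2 * Real.sin θ ^ 2) * Real.sqrt (1 - k^2 * Real.sin θ ^ 2))) -
      (∫ θ in (0:ℝ)..(π/2), Real.sqrt (1 - k^2 * Real.sin θ ^ 2)) / (1-k^2) := by
    rw [hf]
    rw [intervalIntegral.integral_sub (Continuous.intervalIntegrable (cont_inv_g_sqrtg hk) _ _)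
      (Continuous.intervalIntegrable ((cont_sqrtg k).div_const _) _ _),
      intervalIntegral.integral_div]
  rw [h0] at hsplit
  rw [ellE]
  linarith [hsplit]

/-! ### Differentiation under the integral sign -/

lemma ball_sq_lt {k x : ℝ} (hk : k ∈ Set.Ioo (0:ℝ) 1) (hx : x ∈ ball k ((1-k)/2)) :
    x^2 < ((1+k)/2)^2 := by
  obtain ⟨hk0, hk1⟩ := hk
  rw [mem_ball, Real.dist_eq] at hx
  rw [abs_lt] at hx
  nlinarith [hx.1, hx.2]

lemma b_lt_one {k : ℝ} (hk : k ∈ Set.Ioo (0:ℝ) 1) : ((1+k)/2)^2 < 1 := by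
  obtain ⟨hk0, hk1⟩ := hk; nlinarith

lemma hasDerivAt_ellK_raw {k : ℝ} (hk : k ∈ Set.Ioo (0:ℝ) 1) :
    HasDerivAt ellK (∫ θ in (0:ℝ)..(π/2),
      k * Real.sin θ ^ 2 /
        ((1 - k^2 * Real.sin θ ^ 2) * Real.sqrt (1 - k^2 * Real.sin θ ^ 2))) k := by
  obtain ⟨hk0, hk1⟩ := hk
  set b := (1+k)/2 with hb
  have hbpos : 0 < b := by positivity
  have hb1 : b^2 < 1 := b_lt_one ⟨hk0, hk1⟩
  have hb2 : (0:ℝ) < 1 - b^2 := by linarith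
  have hε : (0:ℝ) < (1-k)/2 := by linarith
  have hk2 : k^2 < 1 := by nlinarith
  have key := intervalIntegral.hasDerivAt_integral_of_dominated_loc_of_deriv_le
    (F := fun x θ => 1 / Real.sqrt (1 - x^2 * Real.sin θ ^ 2))
    (F' := fun x θ => x * Real.sin θ ^ 2 /
        ((1 - x^2 * Real.sin θ ^ 2) * Real.sqrt (1 - x^2 * Real.sin θ ^ 2)))
    (bound := fun _ => b / ((1 - b^2) * Real.sqrt (1 - b^2)))
    (μ := volume) (a := (0:ℝ)) (b := π/2) (x₀ := k) (ball_mem_nhds k hε)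
    ?meas ?int ?meas' ?bound ?bint ?diff
  · exact key.2
  case meas =>
    filter_upwards with x
    exact (Measurable.aestronglyMeasurable (by
      apply Measurable.div measurable_const
      exact (Real.continuous_sqrt.comp (by fun_prop)).measurable))
  case int => exact (cont_inv_sqrtg hk2).intervalIntegrable _ _
  case meas' =>
    exact Continuous.aestronglyMeasurable (by
      apply Continuous.div (by fun_prop) (by fun_prop)
      intro θ
      exact (mul_pos (g_pos hk2 θ) (Real.sqrt_pos.2 (g_pos hk2 θ))).ne')
  case bound =>
    filter_upwards with θ _ x hx
    have hx2 : x^2 < b^2 := ball_sq_lt ⟨hk0, hk1⟩ hx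
    have hx1 : x^2 < 1 := lt_trans hx2 hb1
    have hgx : 0 < 1 - x^2 * Real.sin θ ^ 2 := g_pos hx1 θ
    have hgxb : 1 - b^2 ≤ 1 - x^2 * Real.sin θ ^ 2 := by
      nlinarith [Real.sin_sq_le_one θ, sq_nonneg x]
    have hd : (1 - b^2) * Real.sqrt (1 - b^2) ≤
        (1 - x^2 * Real.sin θ ^ 2) * Real.sqrt (1 - x^2 * Real.sin θ ^ 2) :=
      mul_le_mul hgxb (Real.sqrt_le_sqrt hgxb) (Real.sqrt_nonneg _) hgx.le
    rw [Real.norm_eq_abs, abs_div, abs_of_pos (mul_pos hgx (Real.sqrt_pos.2 hgx))]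
    apply div_le_div₀ (le_of_lt hbpos) _ (mul_pos hb2 (Real.sqrt_pos.2 hb2)) hd
    · calc |x * Real.sin θ ^ 2| = |x| * Real.sin θ ^ 2 := by
            rw [abs_mul, abs_of_nonneg (sq_nonneg (Real.sin θ))]
        _ ≤ b * 1 := by
            apply mul_le_mul _ (Real.sin_sq_le_one θ) (sq_nonneg _) hbpos.le
            rw [← Real.sqrt_sq hbpos.le, ← Real.sqrt_sq_eq_abs]
            exact Real.sqrt_le_sqrt hx2.le
        _ = b := mul_one b
  case bint => exact intervalIntegrable_const
  case diff =>
    filter_upwards with θ _ x hx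
    exact hasDerivAt_inv_sqrtg θ (lt_trans (ball_sq_lt ⟨hk0, hk1⟩ hx) hb1)

lemma hasDerivAt_ellE_raw {k : ℝ} (hk : k ∈ Set.Ioo (0:ℝ) 1) :
    HasDerivAt ellE (∫ θ in (0:ℝ)..(π/2),
      -(k * Real.sin θ ^ 2) / Real.sqrt (1 - k^2 * Real.sin θ ^ 2)) k := by
  obtain ⟨hk0, hk1⟩ := hk
  set b := (1+k)/2 with hb
  have hbpos : 0 < b := by positivity
  have hb1 : b^2 < 1 := b_lt_one ⟨hk0, hk1⟩
  have hb2 : (0:ℝ) < 1 - b^2 := by linarith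
  have hε : (0:ℝ) < (1-k)/2 := by linarith
  have hk2 : k^2 < 1 := by nlinarith
  have key := intervalIntegral.hasDerivAt_integral_of_dominated_loc_of_deriv_le
    (F := fun x θ => Real.sqrt (1 - x^2 * Real.sin θ ^ 2))
    (F' := fun x θ => -(x * Real.sin θ ^ 2) / Real.sqrt (1 - x^2 * Real.sin θ ^ 2))
    (bound := fun _ => b / Real.sqrt (1 - b^2))
    (μ := volume) (a := (0:ℝ)) (b := π/2) (x₀ := k) (ball_mem_nhds k hε)
    ?meas ?int ?meas' ?bound ?bint ?diff
  · exact key.2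
  case meas =>
    filter_upwards with x
    exact Continuous.aestronglyMeasurable (by fun_prop)
  case int => exact (cont_sqrtg k).intervalIntegrable _ _
  case meas' =>
    exact Continuous.aestronglyMeasurable (by
      apply Continuous.div (by fun_prop) (cont_sqrtg k)
      intro θ
      exact (Real.sqrt_pos.2 (g_pos hk2 θ)).ne')
  case bound =>
    filter_upwards with θ _ x hx
    have hx2 : x^2 < b^2 := ball_sq_lt ⟨hk0, hk1⟩ hx
    have hx1 : x^2 < 1 := lt_trans hx2 hb1
    have hgx : 0 < 1 - x^2 * Real.sin θ ^ 2 := g_pos hx1 θ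
    have hgxb : 1 - b^2 ≤ 1 - x^2 * Real.sin θ ^ 2 := by
      nlinarith [Real.sin_sq_le_one θ, sq_nonneg x]
    have hd : Real.sqrt (1 - b^2) ≤ Real.sqrt (1 - x^2 * Real.sin θ ^ 2) :=
      Real.sqrt_le_sqrt hgxb
    rw [Real.norm_eq_abs, abs_div, abs_of_pos (Real.sqrt_pos.2 hgx), abs_neg]
    apply div_le_div₀ (le_of_lt hbpos) _ (Real.sqrt_pos.2 hb2) hd
    · calc |x * Real.sin θ ^ 2| = |x| * Real.sin θ ^ 2 := by
            rw [abs_mul, abs_of_nonneg (sq_nonneg (Real.sin θ))]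
        _ ≤ b * 1 := by
            apply mul_le_mul _ (Real.sin_sq_le_one θ) (sq_nonneg _) hbpos.le
            rw [← Real.sqrt_sq hbpos.le, ← Real.sqrt_sq_eq_abs]
            exact Real.sqrt_le_sqrt hx2.le
        _ = b := mul_one b
  case bint => exact intervalIntegrable_const
  case diff =>
    filter_upwards with θ _ x hx
    exact hasDerivAt_sqrtg θ (lt_trans (ball_sq_lt ⟨hk0, hk1⟩ hx) hb1)

/-! ### Closed-form derivatives -/

lemma hasDerivAt_ellK {k : ℝ} (hk : k ∈ Set.Ioo (0:ℝ) 1) :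
    HasDerivAt ellK ((ellE k - (1 - k^2) * ellK k) / (k * (1 - k^2))) k := by
  obtain ⟨hk0, hk1⟩ := hk
  have hk2 : k^2 < 1 := by nlinarith
  have h := hasDerivAt_ellK_raw ⟨hk0, hk1⟩
  have hfun : (fun θ => k * Real.sin θ ^ 2 /
        ((1 - k^2 * Real.sin θ ^ 2) * Real.sqrt (1 - k^2 * Real.sin θ ^ 2))) =
      fun θ => (1/k) * (1 / ((1 - k^2 * Real.sin θ ^ 2) * Real.sqrt (1 - k^2 * Real.sin θ ^ 2))
        - 1 / Real.sqrt (1 - k^2 * Real.sin θ ^ 2)) := by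
    funext θ
    have hg := g_pos hk2 θ
    have hs : (0:ℝ) < Real.sqrt (1 - k^2 * Real.sin θ ^ 2) := Real.sqrt_pos.2 hg
    have hsq : Real.sqrt (1 - k^2 * Real.sin θ ^ 2) ^ 2 = 1 - k^2 * Real.sin θ ^ 2 :=
      Real.sq_sqrt hg.le
    field_simp
    try ring
  rw [hfun] at h
  rw [intervalIntegral.integral_const_mul,
    intervalIntegral.integral_sub ((cont_inv_g_sqrtg hk2).intervalIntegrable _ _)
      ((cont_inv_sqrtg hk2).intervalIntegrable _ _),
    integral_inv_g_sqrtg hk2] at h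
  have h1 : (1:ℝ) - k^2 ≠ 0 := by nlinarith
  have : (1/k) * (ellE k / (1 - k^2) - ellK k) = (ellE k - (1 - k^2) * ellK k) / (k * (1 - k^2)) := by
    field_simp
    try ring
  rw [ellK] at this ⊢
  rw [this] at h
  exact h

lemma hasDerivAt_ellE {k : ℝ} (hk : k ∈ Set.Ioo (0:ℝ) 1) :
    HasDerivAt ellE ((ellE k - ellK k) / k) k := by
  obtain ⟨hk0, hk1⟩ := hk
  have hk2 : k^2 < 1 := by nlinarith
  have h := hasDerivAt_ellE_raw ⟨hk0, hk1⟩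
  have hfun : (fun θ => -(k * Real.sin θ ^ 2) / Real.sqrt (1 - k^2 * Real.sin θ ^ 2)) =
      fun θ => (1/k) * (Real.sqrt (1 - k^2 * Real.sin θ ^ 2)
        - 1 / Real.sqrt (1 - k^2 * Real.sin θ ^ 2)) := by
    funext θ
    have hg := g_pos hk2 θ
    have hs : (0:ℝ) < Real.sqrt (1 - k^2 * Real.sin θ ^ 2) := Real.sqrt_pos.2 hg
    have hsq : Real.sqrt (1 - k^2 * Real.sin θ ^ 2) ^ 2 = 1 - k^2 * Real.sin θ ^ 2 :=
      Real.sq_sqrt hg.le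
    field_simp
    linear_combination -hsq
  rw [hfun] at h
  rw [intervalIntegral.integral_const_mul,
    intervalIntegral.integral_sub ((cont_sqrtg k).intervalIntegrable _ _)
      ((cont_inv_sqrtg hk2).intervalIntegrable _ _)] at h
  have : (1/k) * (ellE k - ellK k) = (ellE k - ellK k) / k := by field_simp
  rw [ellE, ellK] at this ⊢
  rw [this] at h
  exact h

/-! ### Complementary modulus -/

lemma comp_mem {k : ℝ} (hk : k ∈ Set.Ioo (0:ℝ) 1) :
    Real.sqrt (1 - k^2) ∈ Set.Ioo (0:ℝ) 1 := by
  obtain ⟨hk0, hk1⟩ := hk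
  constructor
  · exact Real.sqrt_pos.2 (by nlinarith)
  · exact (Real.sqrt_lt' one_pos).2 (by nlinarith)

lemma comp_sq {k : ℝ} (hk : k ∈ Set.Ioo (0:ℝ) 1) :
    Real.sqrt (1 - k^2) ^ 2 = 1 - k^2 := by
  obtain ⟨hk0, hk1⟩ := hk
  exact Real.sq_sqrt (by nlinarith)

lemma hasDerivAt_comp_mod {k : ℝ} (hk : k ∈ Set.Ioo (0:ℝ) 1) :
    HasDerivAt (fun x : ℝ => Real.sqrt (1 - x^2)) (-k / Real.sqrt (1 - k^2)) k := by
  obtain ⟨hk0, hk1⟩ := hk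
  have h1 : (0:ℝ) < 1 - k^2 := by nlinarith
  have hinner : HasDerivAt (fun x : ℝ => 1 - x^2) (-(2*k)) k := by
    simpa using ((hasDerivAt_pow 2 k).const_sub 1)
  have h := (Real.hasDerivAt_sqrt h1.ne').comp k hinner
  refine h.congr_deriv ?_
  field_simp

lemma hasDerivAt_ellK' {k : ℝ} (hk : k ∈ Set.Ioo (0:ℝ) 1) :
    HasDerivAt ellK' (-((ellE' k - k^2 * ellK' k) / (k * (1 - k^2)))) k := by
  obtain ⟨hk0, hk1⟩ := hk
  have hm := comp_mem ⟨hk0, hk1⟩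
  have hmsq := comp_sq ⟨hk0, hk1⟩
  have h := (hasDerivAt_ellK hm).comp k (hasDerivAt_comp_mod ⟨hk0, hk1⟩)
  have : HasDerivAt ellK'
      ((ellE (Real.sqrt (1-k^2)) - (1 - Real.sqrt (1-k^2)^2) * ellK (Real.sqrt (1-k^2))) /
        (Real.sqrt (1-k^2) * (1 - Real.sqrt (1-k^2)^2)) * (-k / Real.sqrt (1-k^2))) k := h
  convert this using 1
  rw [hmsq, ellK', ellE']
  have hmpos : (0:ℝ) < Real.sqrt (1 - k^2) := hm.1
  have h2 : (1:ℝ) - k^2 ≠ 0 := by nlinarith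
  have hms : Real.sqrt (1-k^2) * Real.sqrt (1-k^2) = 1 - k^2 :=
    Real.mul_self_sqrt (by nlinarith)
  field_simp
  ring_nf
  linear_combination (-(k^2*ellE (Real.sqrt (1-k^2))) + k^4 * ellK (Real.sqrt (1-k^2))) * hmsq

lemma hasDerivAt_ellE' {k : ℝ} (hk : k ∈ Set.Ioo (0:ℝ) 1) :
    HasDerivAt ellE' (-(k * (ellE' k - ellK' k) / (1 - k^2))) k := by
  obtain ⟨hk0, hk1⟩ := hk
  have hm := comp_mem ⟨hk0, hk1⟩
  have hmsq := comp_sq ⟨hk0, hk1⟩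
  have h := (hasDerivAt_ellE hm).comp k (hasDerivAt_comp_mod ⟨hk0, hk1⟩)
  have : HasDerivAt ellE'
      ((ellE (Real.sqrt (1-k^2)) - ellK (Real.sqrt (1-k^2))) / Real.sqrt (1-k^2) *
        (-k / Real.sqrt (1-k^2))) k := h
  convert this using 1
  rw [ellK', ellE']
  have hmpos : (0:ℝ) < Real.sqrt (1 - k^2) := hm.1
  have hms : Real.sqrt (1-k^2) * Real.sqrt (1-k^2) = 1 - k^2 :=
    Real.mul_self_sqrt (by nlinarith)
  have h2 : (1:ℝ) - k^2 ≠ 0 := by nlinarith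
  field_simp
  ring_nf
  linear_combination (ellK (Real.sqrt (1-k^2)) - ellE (Real.sqrt (1-k^2))) * hms

/-! ### The Legendre expression has zero derivative -/

noncomputable def Leg (t : ℝ) : ℝ := ellK' t * ellE t + ellK t * ellE' t - ellK t * ellK' t

lemma hasDerivAt_Leg {k : ℝ} (hk : k ∈ Set.Ioo (0:ℝ) 1) : HasDerivAt Leg 0 k := by
  obtain ⟨hk0, hk1⟩ := hk
  have hK := hasDerivAt_ellK ⟨hk0, hk1⟩
  have hE := hasDerivAt_ellE ⟨hk0, hk1⟩
  have hK' := hasDerivAt_ellK' ⟨hk0, hk1⟩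
  have hE' := hasDerivAt_ellE' ⟨hk0, hk1⟩
  have h := ((hK'.mul hE).add (hK.mul hE')).sub (hK.mul hK')
  have hzero : -((ellE' k - k^2 * ellK' k) / (k * (1 - k^2))) * ellE k +
      ellK' k * ((ellE k - ellK k) / k) +
      ((ellE k - (1 - k^2) * ellK k) / (k * (1 - k^2)) * ellE' k +
        ellK k * -(k * (ellE' k - ellK' k) / (1 - k^2))) -
      ((ellE k - (1 - k^2) * ellK k) / (k * (1 - k^2)) * ellK' k +
        ellK k * -((ellE' k - k^2 * ellK' k) / (k * (1 - k^2)))) = 0 := by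
    have h1 : (1:ℝ) - k^2 ≠ 0 := by nlinarith
    have h2 : k ≠ 0 := ne_of_gt hk0
    field_simp
    ring
  rw [show Leg = fun t => ellK' t * ellE t + ellK t * ellE' t - ellK t * ellK' t from rfl]
  rw [← hzero]
  exact h

lemma Leg_const {a b : ℝ} (ha : a ∈ Set.Ioo (0:ℝ) 1) (hb : b ∈ Set.Ioo (0:ℝ) 1) :
    Leg a = Leg b := by
  wlog hab : a < b generalizing a b
  · rcases eq_or_lt_of_le (not_lt.1 hab) with h | h
    · rw [h]
    · exact (this hb ha h).symm
  have hsub : Set.Icc a b ⊆ Set.Ioo (0:ℝ) 1 := fun x hx =>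
    ⟨lt_of_lt_of_le ha.1 hx.1, lt_of_le_of_lt hx.2 hb.2⟩
  have hcont : ContinuousOn Leg (Set.Icc a b) := fun x hx =>
    ((hasDerivAt_Leg (hsub hx)).continuousAt).continuousWithinAt
  have hderiv : ∀ x ∈ Set.Ioo a b, HasDerivAt Leg ((fun _ => (0:ℝ)) x) x := fun x hx =>
    hasDerivAt_Leg (hsub ⟨hx.1.le, hx.2.le⟩)
  obtain ⟨c, _, hc⟩ := exists_hasDerivAt_eq_slope Leg (fun _ => (0:ℝ)) hab hcont hderiv
  have := hc.symm
  rw [div_eq_zero_iff] at this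
  rcases this with h | h
  · linarith [sub_eq_zero.1 h]
  · linarith [sub_ne_zero.2 (ne_of_gt hab)]

/-! ### Bounds -/

lemma ellK_lower {k : ℝ} (hk2 : k^2 < 1) : π/2 ≤ ellK k := by
  have h : ∫ θ in (0:ℝ)..(π/2), (1:ℝ) ≤ ellK k := by
    apply intervalIntegral.integral_mono_on (by positivity)
      intervalIntegrable_const ((cont_inv_sqrtg hk2).intervalIntegrable _ _)
    intro θ _
    rw [le_div_iff₀ (Real.sqrt_pos.2 (g_pos hk2 θ)), one_mul]
    exact Real.sqrt_le_one.2 (by nlinarith [sq_nonneg (k * Real.sin θ)])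
  simpa using h

lemma ellK_upper {k : ℝ} (hk2 : k^2 < 1) : ellK k ≤ (π/2) * (1 / Real.sqrt (1 - k^2)) := by
  have h1 : (0:ℝ) < 1 - k^2 := by linarith
  have h : ellK k ≤ ∫ θ in (0:ℝ)..(π/2), 1 / Real.sqrt (1 - k^2) := by
    apply intervalIntegral.integral_mono_on (by positivity)
      ((cont_inv_sqrtg hk2).intervalIntegrable _ _) intervalIntegrable_const
    intro θ _
    apply one_div_le_one_div_of_le (Real.sqrt_pos.2 h1)
    exact Real.sqrt_le_sqrt (by nlinarith [Real.sin_sq_le_one θ, sq_nonneg k])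
  simpa [mul_comm] using h

lemma ellE_lower {k : ℝ} (hk2 : k^2 ≤ 1) : 1 ≤ ellE k := by
  have h : ∫ θ in (0:ℝ)..(π/2), Real.cos θ ≤ ellE k := by
    apply intervalIntegral.integral_mono_on (by positivity)
      (Real.continuous_cos.intervalIntegrable _ _) ((cont_sqrtg k).intervalIntegrable _ _)
    intro θ hθ
    have hcos : 0 ≤ Real.cos θ :=
      Real.cos_nonneg_of_mem_Icc ⟨by linarith [hθ.1, Real.pi_pos], hθ.2⟩
    rw [← Real.sqrt_sq hcos]
    apply Real.sqrt_le_sqrt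
    have := Real.sin_sq_add_cos_sq θ
    nlinarith [sq_nonneg (Real.sin θ)]
  simpa using h

lemma ellE_upper {k : ℝ} (hk2 : k^2 ≤ 1) :
    ellE k ≤ 1 + (π/2) * Real.sqrt (1 - k^2) := by
  have hd : (0:ℝ) ≤ 1 - k^2 := by linarith
  have h : ellE k ≤ ∫ θ in (0:ℝ)..(π/2), (Real.cos θ + Real.sqrt (1 - k^2)) := by
    apply intervalIntegral.integral_mono_on (by positivity)
      ((cont_sqrtg k).intervalIntegrable _ _)
      ((Real.continuous_cos.add continuous_const).intervalIntegrable _ _)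
    intro θ hθ
    have hcos : 0 ≤ Real.cos θ :=
      Real.cos_nonneg_of_mem_Icc ⟨by linarith [hθ.1, Real.pi_pos], hθ.2⟩
    have hds : Real.sqrt (1-k^2) ^ 2 = 1 - k^2 := Real.sq_sqrt hd
    simp only [Pi.add_apply]
    rw [show Real.cos θ + Real.sqrt (1-k^2) =
      Real.sqrt ((Real.cos θ + Real.sqrt (1-k^2))^2) from
      (Real.sqrt_sq (by positivity)).symm]
    apply Real.sqrt_le_sqrt
    have := Real.sin_sq_add_cos_sq θ
    nlinarith [Real.sqrt_nonneg (1-k^2), mul_nonneg hcos (Real.sqrt_nonneg (1-k^2)),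
      sq_nonneg (Real.sin θ)]
  have : ∫ θ in (0:ℝ)..(π/2), (Real.cos θ + Real.sqrt (1 - k^2)) =
      1 + (π/2) * Real.sqrt (1 - k^2) := by
    rw [intervalIntegral.integral_add (Real.continuous_cos.intervalIntegrable _ _)
      intervalIntegrable_const]
    simp
  linarith [h, this.symm.le]

lemma KsubE_nonneg {k : ℝ} (hk2 : k^2 < 1) : 0 ≤ ellK k - ellE k := by
  rw [ellK, ellE, ← intervalIntegral.integral_sub ((cont_inv_sqrtg hk2).intervalIntegrable _ _)
    ((cont_sqrtg k).intervalIntegrable _ _)]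
  apply intervalIntegral.integral_nonneg (by positivity)
  intro θ _
  have hg := g_pos hk2 θ
  have hs := Real.sqrt_pos.2 hg
  have hle : Real.sqrt (1 - k^2 * Real.sin θ ^ 2) ≤ 1 :=
    Real.sqrt_le_one.2 (by nlinarith [sq_nonneg (k * Real.sin θ)])
  have : Real.sqrt (1 - k^2 * Real.sin θ ^ 2) ≤ 1 / Real.sqrt (1 - k^2 * Real.sin θ ^ 2) := by
    rw [le_div_iff₀ hs]
    nlinarith
  linarith

lemma KsubE_upper {k : ℝ} (hk2 : k^2 < 1) :
    ellK k - ellE k ≤ (π/2) * (k^2 / Real.sqrt (1 - k^2)) := by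
  have h1 : (0:ℝ) < 1 - k^2 := by linarith
  rw [ellK, ellE, ← intervalIntegral.integral_sub ((cont_inv_sqrtg hk2).intervalIntegrable _ _)
    ((cont_sqrtg k).intervalIntegrable _ _)]
  have h : ∫ θ in (0:ℝ)..(π/2),
      (1 / Real.sqrt (1 - k^2 * Real.sin θ ^ 2) - Real.sqrt (1 - k^2 * Real.sin θ ^ 2)) ≤
      ∫ θ in (0:ℝ)..(π/2), k^2 / Real.sqrt (1 - k^2) := by
    apply intervalIntegral.integral_mono_on (by positivity)
      (((cont_inv_sqrtg hk2).sub (cont_sqrtg k)).intervalIntegrable _ _)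
      intervalIntegrable_const
    intro θ _
    have hg := g_pos hk2 θ
    have hs := Real.sqrt_pos.2 hg
    have hsq : Real.sqrt (1 - k^2 * Real.sin θ ^ 2) ^ 2 = 1 - k^2 * Real.sin θ ^ 2 :=
      Real.sq_sqrt hg.le
    have heq : 1 / Real.sqrt (1 - k^2 * Real.sin θ ^ 2) - Real.sqrt (1 - k^2 * Real.sin θ ^ 2) =
        k^2 * Real.sin θ ^ 2 / Real.sqrt (1 - k^2 * Real.sin θ ^ 2) := by
      field_simp
      try linear_combination -hsq
    simp only [Pi.sub_apply]
    rw [heq]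
    apply div_le_div₀ (by positivity) _ (Real.sqrt_pos.2 h1)
      (Real.sqrt_le_sqrt (by nlinarith [Real.sin_sq_le_one θ, sq_nonneg k]))
    nlinarith [Real.sin_sq_le_one θ, sq_nonneg k]
  have hc : ∫ θ in (0:ℝ)..(π/2), k^2 / Real.sqrt (1 - k^2) =
      (π/2) * (k^2 / Real.sqrt (1 - k^2)) := by
    rw [intervalIntegral.integral_const, smul_eq_mul]
    ring
  rw [hc] at h
  exact h

/-! ### Limits as `k → 0⁺` -/

lemma mem_Ioo_eventually : Set.Ioo (0:ℝ) 1 ∈ 𝓝[>] (0:ℝ) :=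
  Ioo_mem_nhdsGT_of_mem ⟨le_refl 0, one_pos⟩

lemma sq_lt_one_of_Ioo {t : ℝ} (ht : t ∈ Set.Ioo (0:ℝ) 1) : t^2 < 1 := by
  obtain ⟨h0, h1⟩ := ht; nlinarith

lemma comp_comp {t : ℝ} (ht : t ∈ Set.Ioo (0:ℝ) 1) :
    Real.sqrt (1 - Real.sqrt (1 - t^2)^2) = t := by
  rw [comp_sq ht, show (1:ℝ) - (1 - t^2) = t^2 by ring, Real.sqrt_sq ht.1.le]

lemma tendsto_ellK_zero : Tendsto ellK (𝓝[>] (0:ℝ)) (𝓝 (π/2)) := by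
  have hu : Tendsto (fun t : ℝ => (π/2) * (1 / Real.sqrt (1 - t^2))) (𝓝[>] (0:ℝ)) (𝓝 (π/2)) := by
    have hc : ContinuousAt (fun t : ℝ => (π/2) * (1 / Real.sqrt (1 - t^2))) 0 := by
      apply ContinuousAt.mul continuousAt_const
      apply ContinuousAt.div continuousAt_const
      · exact Real.continuous_sqrt.continuousAt.comp (by fun_prop)
      · simp
    have h2 := hc.tendsto.mono_left
      (nhdsWithin_le_nhds : 𝓝[Set.Ioi (0:ℝ)] 0 ≤ 𝓝 0)
    simpa using h2
  apply tendsto_of_tendsto_of_tendsto_of_le_of_le' tendsto_const_nhds hu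
  · filter_upwards [mem_Ioo_eventually] with t ht
    exact ellK_lower (sq_lt_one_of_Ioo ht)
  · filter_upwards [mem_Ioo_eventually] with t ht
    exact ellK_upper (sq_lt_one_of_Ioo ht)

lemma tendsto_ellE'_zero : Tendsto ellE' (𝓝[>] (0:ℝ)) (𝓝 1) := by
  have hu : Tendsto (fun t : ℝ => 1 + (π/2) * t) (𝓝[>] (0:ℝ)) (𝓝 1) := by
    have hc : ContinuousAt (fun t : ℝ => 1 + (π/2) * t) 0 := by fun_prop
    have h2 := hc.tendsto.mono_left
      (nhdsWithin_le_nhds : 𝓝[Set.Ioi (0:ℝ)] 0 ≤ 𝓝 0)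
    simpa using h2
  apply tendsto_of_tendsto_of_tendsto_of_le_of_le' tendsto_const_nhds hu
  · filter_upwards [mem_Ioo_eventually] with t ht
    have hm := comp_mem ht
    exact ellE_lower (le_of_lt (sq_lt_one_of_Ioo hm))
  · filter_upwards [mem_Ioo_eventually] with t ht
    have hm := comp_mem ht
    have h := ellE_upper (le_of_lt (sq_lt_one_of_Ioo hm))
    rw [comp_comp ht] at h
    exact h

lemma tendsto_term3 :
    Tendsto (fun t => ellK' t * (ellE t - ellK t)) (𝓝[>] (0:ℝ)) (𝓝 0) := by
  have hl : Tendsto (fun t : ℝ => -((π^2/4) * (t / Real.sqrt (1 - t^2))))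
      (𝓝[>] (0:ℝ)) (𝓝 0) := by
    have hc : ContinuousAt (fun t : ℝ => -((π^2/4) * (t / Real.sqrt (1 - t^2)))) 0 := by
      apply ContinuousAt.neg
      apply ContinuousAt.mul continuousAt_const
      apply ContinuousAt.div continuousAt_id
      · exact Real.continuous_sqrt.continuousAt.comp (by fun_prop)
      · simp
    have h2 := hc.tendsto.mono_left
      (nhdsWithin_le_nhds : 𝓝[Set.Ioi (0:ℝ)] 0 ≤ 𝓝 0)
    simpa using h2
  apply tendsto_of_tendsto_of_tendsto_of_le_of_le' hl tendsto_const_nhds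
  · filter_upwards [mem_Ioo_eventually] with t ht
    have ht2 := sq_lt_one_of_Ioo ht
    have hm := comp_mem ht
    have hm2 := sq_lt_one_of_Ioo hm
    -- ellK' t ≤ (π/2) * (1/t)
    have hKu : ellK' t ≤ (π/2) * (1/t) := by
      have h := ellK_upper hm2
      rw [comp_comp ht] at h
      exact h
    have hKl : 0 ≤ ellK' t := le_trans (by positivity) (ellK_lower hm2)
    have hKE0 : 0 ≤ ellK t - ellE t := KsubE_nonneg ht2
    have hKEu : ellK t - ellE t ≤ (π/2) * (t^2 / Real.sqrt (1 - t^2)) := KsubE_upper ht2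
    have hmul : ellK' t * (ellK t - ellE t) ≤
        ((π/2) * (1/t)) * ((π/2) * (t^2 / Real.sqrt (1 - t^2))) :=
      mul_le_mul hKu hKEu hKE0 (mul_nonneg (by positivity) (one_div_nonneg.2 ht.1.le))
    have heq : ((π/2) * (1/t)) * ((π/2) * (t^2 / Real.sqrt (1 - t^2))) =
        (π^2/4) * (t / Real.sqrt (1 - t^2)) := by
      have ht0 : t ≠ 0 := ne_of_gt ht.1
      have hs : Real.sqrt (1 - t^2) ≠ 0 :=
        ne_of_gt (Real.sqrt_pos.2 (by nlinarith [sq_lt_one_of_Ioo ht]))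
      field_simp
      ring
    rw [heq] at hmul
    nlinarith [hmul]
  · filter_upwards [mem_Ioo_eventually] with t ht
    have ht2 := sq_lt_one_of_Ioo ht
    have hm2 := sq_lt_one_of_Ioo (comp_mem ht)
    have hKl : 0 ≤ ellK' t := le_trans (by positivity) (ellK_lower hm2)
    have hKE0 : 0 ≤ ellK t - ellE t := KsubE_nonneg ht2
    nlinarith [mul_nonneg hKl hKE0]

/-- Legendre's relation. -/
theorem stmt_1 (k : ℝ) (hk : k ∈ Set.Ioo (0:ℝ) 1) :
    ellK' k * ellE k + ellK k * ellE' k - ellK k * ellK' k = π/2 := by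
  have h1 : Tendsto Leg (𝓝[>] (0:ℝ)) (𝓝 (π/2)) := by
    have hLeq : Leg = fun t => ellK' t * (ellE t - ellK t) + ellK t * ellE' t := by
      funext t; simp only [Leg]; ring
    rw [hLeq]
    have := tendsto_term3.add (tendsto_ellK_zero.mul tendsto_ellE'_zero)
    simpa using this
  have h2 : Tendsto Leg (𝓝[>] (0:ℝ)) (𝓝 (Leg k)) := by
    apply Tendsto.congr' _
      (tendsto_const_nhds : Tendsto (fun _ : ℝ => Leg k) (𝓝[>] (0:ℝ)) (𝓝 (Leg k)))
    filter_upwards [mem_Ioo_eventually] with t ht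
    exact (Leg_const ht hk).symm
  have := tendsto_nhds_unique h2 h1
  simpa [Leg] using this
end

section
/- For every k ∈ (0,1), the improper integral ∫₀^∞ (1−k²)/(√(1+t²)·(√(1+k²t²) + k·√(1+t²))) dt converges and equals K'(k) − E'(k). -/
open Real MeasureTheory Set Filter Topology

set_option maxHeartbeats 1600000 in
theorem stmt_3 (k : ℝ) (hk : k ∈ Set.Ioo (0:ℝ) 1) :
    IntegrableOn
      (fun t : ℝ => (1 - k^2) /
        (Real.sqrt (1 + t^2) * (Real.sqrt (1 + k^2 * t^2) + k * Real.sqrt (1 + t^2))))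
      (Set.Ioi 0) volume ∧
    ∫ t in Set.Ioi (0:ℝ),
        (1 - k^2) /
          (Real.sqrt (1 + t^2) * (Real.sqrt (1 + k^2 * t^2) + k * Real.sqrt (1 + t^2)))
      = ellK' k - ellE' k := by
  obtain ⟨hk0, hk1⟩ := hk
  have hk2 : (0:ℝ) < 1 - k^2 := by nlinarith
  set F : ℝ → ℝ := fun t => (1 - k^2) /
      (Real.sqrt (1 + t^2) * (Real.sqrt (1 + k^2 * t^2) + k * Real.sqrt (1 + t^2))) with hFdef
  set G : ℝ → ℝ := fun t => (1 - k^2) * t^2 /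
      ((1 + t^2) * Real.sqrt (1 + t^2) * Real.sqrt (1 + k^2 * t^2)) with hGdef
  have hBpos : ∀ t : ℝ, 0 < Real.sqrt (1 + t^2) := fun t => Real.sqrt_pos.mpr (by positivity)
  have hApos : ∀ t : ℝ, 0 < Real.sqrt (1 + k^2 * t^2) := fun t => Real.sqrt_pos.mpr (by positivity)
  have hB2 : ∀ t : ℝ, Real.sqrt (1 + t^2) ^ 2 = 1 + t^2 := fun t => Real.sq_sqrt (by positivity)
  have hA2 : ∀ t : ℝ, Real.sqrt (1 + k^2 * t^2) ^ 2 = 1 + k^2 * t^2 :=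
    fun t => Real.sq_sqrt (by positivity)
  have hAB : ∀ t : ℝ, k * Real.sqrt (1 + t^2) ≤ Real.sqrt (1 + k^2 * t^2) := by
    intro t
    have e : k * Real.sqrt (1 + t^2) = Real.sqrt (k^2 * (1 + t^2)) := by
      rw [Real.sqrt_mul (by positivity), Real.sqrt_sq hk0.le]
    rw [e]
    exact Real.sqrt_le_sqrt (by nlinarith)
  have hden : ∀ t : ℝ,
      0 < Real.sqrt (1 + t^2) * (Real.sqrt (1 + k^2 * t^2) + k * Real.sqrt (1 + t^2)) :=
    fun t => mul_pos (hBpos t) (add_pos (hApos t) (mul_pos hk0 (hBpos t)))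
  -- comparison function
  have hφint : IntegrableOn (fun t : ℝ => (1 - k^2)/k * (1 + t^2)⁻¹) (Ioi 0) :=
    (integrable_inv_one_add_sq.const_mul _).integrableOn
  have hFnonneg : ∀ t : ℝ, 0 ≤ F t := fun t => div_nonneg hk2.le (hden t).le
  have hGnonneg : ∀ t : ℝ, 0 ≤ G t := fun t => by
    rw [hGdef]; positivity
  have hFbound : ∀ t : ℝ, ‖F t‖ ≤ (1 - k^2)/k * (1 + t^2)⁻¹ := by
    intro t
    rw [Real.norm_eq_abs, abs_of_nonneg (hFnonneg t)]
    have h1 : (1 - k^2)/k * (1 + t^2)⁻¹ = (1 - k^2) / (k * (1 + t^2)) := by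
      field_simp
    rw [h1, hFdef]
    rw [div_le_div_iff₀ (hden t) (by positivity)]
    have e : (1-k^2)*k*(Real.sqrt (1+t^2)^2) = (1-k^2)*k*(1+t^2) := by rw [hB2 t]
    nlinarith [mul_nonneg hk2.le (mul_pos (hBpos t) (hApos t)).le, e]
  have hGbound : ∀ t : ℝ, ‖G t‖ ≤ (1 - k^2)/k * (1 + t^2)⁻¹ := by
    intro t
    rw [Real.norm_eq_abs, abs_of_nonneg (hGnonneg t)]
    have h1 : (1 - k^2)/k * (1 + t^2)⁻¹ = (1 - k^2) / (k * (1 + t^2)) := by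
      field_simp
    rw [h1, hGdef]
    rw [div_le_div_iff₀ (by positivity) (by positivity)]
    have hBA : k * (1 + t^2) ≤ Real.sqrt (1 + t^2) * Real.sqrt (1 + k^2 * t^2) := by
      nlinarith [mul_le_mul_of_nonneg_left (hAB t) (hBpos t).le, hB2 t]
    have h2 : (1-k^2)*(1+t^2)*(k*(1+t^2)) ≤
        (1-k^2)*(1+t^2)*(Real.sqrt (1+t^2)*Real.sqrt (1+k^2*t^2)) :=
      mul_le_mul_of_nonneg_left hBA (by positivity)
    have h3 : (0:ℝ) ≤ (1-k^2)*k*(1+t^2) :=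
      mul_nonneg (mul_nonneg hk2.le hk0.le) (by positivity)
    nlinarith [h2, h3]
  
  -- continuity and integrability
  have hFcont : Continuous F := by
    rw [hFdef]
    exact continuous_const.div (by fun_prop) (fun t => (hden t).ne')
  have hGcont : Continuous G := by
    rw [hGdef]
    apply Continuous.div (by fun_prop) (by fun_prop)
    intro t
    have : (0:ℝ) < (1 + t^2) * Real.sqrt (1 + t^2) * Real.sqrt (1 + k^2 * t^2) := by positivity
    exact this.ne'
  have intF : IntegrableOn F (Ioi 0) :=
    hφint.mono' hFcont.aestronglyMeasurable.restrict (ae_of_all _ fun t => hFbound t)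
  have intG : IntegrableOn G (Ioi 0) :=
    hφint.mono' hGcont.aestronglyMeasurable.restrict (ae_of_all _ fun t => hGbound t)
  -- antiderivative of F - G
  set H : ℝ → ℝ := fun t => t * Real.sqrt (1 + k^2*t^2) / Real.sqrt (1 + t^2) - k * t with hHdef
  have hHF : ∀ t : ℝ, H t = t * F t := by
    intro t
    have ha := hApos t; have hb := hBpos t; have ha2 := hA2 t; have hb2 := hB2 t
    rw [hHdef, hFdef]
    have hd : Real.sqrt (1 + k^2*t^2) + k * Real.sqrt (1+t^2) > 0 :=
      add_pos ha (mul_pos hk0 hb)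
    field_simp
    have ha2' : Real.sqrt (1 + t^2*k^2) ^ 2 = 1 + t^2*k^2 := Real.sq_sqrt (by positivity)
    linear_combination t * ha2' - t*k^2 * hb2
  have hHderiv : ∀ t : ℝ, HasDerivAt H (F t - G t) t := by
    intro t
    have dA : HasDerivAt (fun t : ℝ => Real.sqrt (1 + k^2*t^2))
        (k^2*(2*t) / (2*Real.sqrt (1+k^2*t^2))) t := by
      have h : HasDerivAt (fun t : ℝ => 1 + k^2*t^2) (k^2*(2*t)) t := by
        simpa using ((hasDerivAt_pow 2 t).const_mul (k^2)).const_add 1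
      exact h.sqrt (by positivity)
    have dB : HasDerivAt (fun t : ℝ => Real.sqrt (1 + t^2)) ((2*t) / (2*Real.sqrt (1+t^2))) t := by
      have h : HasDerivAt (fun t : ℝ => 1 + t^2) (2*t) t := by
        simpa using (hasDerivAt_pow 2 t).const_add 1
      exact h.sqrt (by positivity)
    have dnum : HasDerivAt (fun t : ℝ => t * Real.sqrt (1 + k^2*t^2))
        (1 * Real.sqrt (1 + k^2*t^2) + t * (k^2*(2*t) / (2*Real.sqrt (1+k^2*t^2)))) t :=
      (hasDerivAt_id t).mul dA
    have dq := dnum.div dB (hBpos t).ne'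
    have dk : HasDerivAt (fun t : ℝ => k * t) k t := by
      simpa using (hasDerivAt_id t).const_mul k
    have dH := dq.sub dk
    rw [hHdef]
    convert dH using 1
    · rfl
    · rfl
    · rfl
    have ha := hApos t; have hb := hBpos t; have ha2 := hA2 t; have hb2 := hB2 t
    rw [hFdef, hGdef]
    have hd : Real.sqrt (1 + k^2*t^2) + k * Real.sqrt (1+t^2) > 0 :=
      add_pos ha (mul_pos hk0 hb)
    field_simp
    linear_combination ((1+t^2)*k*(1+t^2)*Real.sqrt (1+t^2) - (1+t^2)*(Real.sqrt (1+k^2*t^2)+k*Real.sqrt (1+t^2))*(Real.sqrt (1+t^2)^2 - t^2)) * ha2 + ((1-k^2)*(Real.sqrt (1+k^2*t^2) - k*t^2*Real.sqrt (1+t^2)) + (1+t^2)*k^2*(1+t^2)*Real.sqrt (1+k^2*t^2) - (1+t^2)*(Real.sqrt (1+k^2*t^2)+k*Real.sqrt (1+t^2))*((1+k^2*t^2)+k^2*t^2 - k*Real.sqrt (1+k^2*t^2)*Real.sqrt (1+t^2))) * hb2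
  -- limit of H at infinity
  have hH0 : Tendsto H atTop (𝓝 0) := by
    have hub : ∀ t : ℝ, t ∈ Ioi (0:ℝ) → H t ≤ (1-k^2)/k / t := by
      intro t ht
      rw [hHF t]
      have h1 : F t ≤ (1-k^2)/k * (1+t^2)⁻¹ := by
        have := hFbound t
        rwa [Real.norm_eq_abs, abs_of_nonneg (hFnonneg t)] at this
      have ht0 : (0:ℝ) < t := ht
      calc t * F t ≤ t * ((1-k^2)/k * (1+t^2)⁻¹) :=
            mul_le_mul_of_nonneg_left h1 ht0.le
        _ ≤ (1-k^2)/k / t := by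
            have e : t * ((1-k^2)/k * (1+t^2)⁻¹) = (1-k^2)*t/(k*(1+t^2)) := by
              field_simp
            rw [e, div_div, div_le_div_iff₀ (by positivity) (by positivity)]
            nlinarith [mul_nonneg hk2.le hk0.le]
    have hlb : ∀ t : ℝ, t ∈ Ioi (0:ℝ) → 0 ≤ H t := by
      intro t ht
      rw [hHF t]
      exact mul_nonneg (le_of_lt ht) (hFnonneg t)
    have hlim : Tendsto (fun t : ℝ => (1-k^2)/k / t) atTop (𝓝 0) :=
      tendsto_const_nhds.div_atTop tendsto_id
    exact squeeze_zero' (eventually_of_mem (Ioi_mem_atTop 0) hlb)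
      (eventually_of_mem (Ioi_mem_atTop 0) hub) hlim
  have hHc : ContinuousWithinAt H (Ici 0) 0 := by
    apply Continuous.continuousWithinAt
    rw [hHdef]
    exact ((continuous_id.mul (by fun_prop)).div (by fun_prop) (fun t => (hBpos t).ne')).sub
      (continuous_const.mul continuous_id)
  have hsub0 : ∫ t in Ioi (0:ℝ), (F t - G t) = 0 := by
    have h0 := integral_Ioi_of_hasDerivAt_of_tendsto hHc (fun t _ => hHderiv t)
      (intF.sub intG) hH0
    have hH00 : H 0 = 0 := by rw [hHdef]; simp
    rw [h0, hH00, sub_zero]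
  have hFG : ∫ t in Ioi (0:ℝ), F t = ∫ t in Ioi (0:ℝ), G t := by
    have h := hsub0
    rw [integral_sub intF intG] at h
    linarith
  -- substitution t = tan θ
  set Θ : ℝ → ℝ := fun θ => (1-k^2) * Real.sin θ^2 / Real.sqrt (1 - (1-k^2) * Real.sin θ^2)
    with hΘdef
  have himg : Real.arctan '' Ioi 0 = Ioo 0 (π/2) := by
    ext y
    simp only [mem_image, mem_Ioi, mem_Ioo]
    constructor
    · rintro ⟨x, hx, rfl⟩
      refine ⟨?_, Real.arctan_lt_pi_div_two x⟩
      rw [← Real.arctan_zero]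
      exact Real.arctan_strictMono hx
    · rintro ⟨h1, h2⟩
      exact ⟨Real.tan y, Real.tan_pos_of_pos_of_lt_pi_div_two h1 h2,
        Real.arctan_tan (by linarith [Real.pi_pos]) h2⟩
  have hsubst := integral_image_eq_integral_abs_deriv_smul (s := Ioi (0:ℝ))
    (f := Real.arctan) (f' := fun x => 1/(1+x^2)) measurableSet_Ioi
    (fun x _ => (Real.hasDerivAt_arctan x).hasDerivWithinAt) Real.arctan_injective.injOn Θ
  rw [himg] at hsubst
  have hGθ : ∫ x in Ioi (0:ℝ), |1/(1+x^2)| • Θ (Real.arctan x) = ∫ x in Ioi (0:ℝ), G x := by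
    apply setIntegral_congr_fun measurableSet_Ioi
    intro x _
    have hb := hBpos x; have ha := hApos x; have hb2 := hB2 x; have ha2 := hA2 x
    rw [hΘdef, hGdef]
    simp only [smul_eq_mul, Real.sin_arctan]
    rw [abs_of_pos (by positivity)]
    have e1 : (x / Real.sqrt (1+x^2))^2 = x^2/(1+x^2) := by
      rw [div_pow, hb2]
    rw [e1]
    have e2 : 1 - (1-k^2) * (x^2/(1+x^2)) = (1+k^2*x^2)/(1+x^2) := by
      field_simp; ring
    rw [e2, Real.sqrt_div (by positivity) _]
    field_simp
    linear_combination x^2 * hb2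
  have hIoo : ∫ θ in Ioo (0:ℝ) (π/2), Θ θ = ∫ θ in (0:ℝ)..(π/2), Θ θ := by
    rw [intervalIntegral.integral_of_le (by positivity), integral_Ioc_eq_integral_Ioo]
  have hKE : ellK' k - ellE' k = ∫ θ in (0:ℝ)..(π/2), Θ θ := by
    have hsq : Real.sqrt (1-k^2)^2 = 1-k^2 := Real.sq_sqrt hk2.le
    have hu : ∀ θ : ℝ, 0 < 1 - (1-k^2) * Real.sin θ^2 := by
      intro θ
      nlinarith [Real.sin_sq_le_one θ, sq_nonneg (Real.sin θ)]
    have c1 : ContinuousOn (fun θ : ℝ => 1 / Real.sqrt (1-(1-k^2)*Real.sin θ^2))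
        (uIcc 0 (π/2)) := by
      apply ContinuousOn.div continuousOn_const
      · fun_prop
      · intro θ _
        exact (Real.sqrt_pos.mpr (hu θ)).ne'
    have c2 : ContinuousOn (fun θ : ℝ => Real.sqrt (1-(1-k^2)*Real.sin θ^2))
        (uIcc 0 (π/2)) := by fun_prop
    rw [ellK', ellE', ellK, ellE]
    simp_rw [hsq]
    rw [← intervalIntegral.integral_sub c1.intervalIntegrable c2.intervalIntegrable]
    apply intervalIntegral.integral_congr
    intro θ _
    have h := hu θ
    have hs : Real.sqrt (1-(1-k^2)*Real.sin θ^2)^2 = 1-(1-k^2)*Real.sin θ^2 :=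
      Real.sq_sqrt h.le
    have hspos : 0 < Real.sqrt (1-(1-k^2)*Real.sin θ^2) := Real.sqrt_pos.mpr h
    rw [hΘdef]
    field_simp
    try linear_combination -hs
  refine ⟨intF, ?_⟩
  calc ∫ t in Ioi (0:ℝ), F t = ∫ t in Ioi (0:ℝ), G t := hFG
    _ = ∫ θ in Ioo (0:ℝ) (π/2), Θ θ := (hsubst.trans hGθ).symm
    _ = ∫ θ in (0:ℝ)..(π/2), Θ θ := hIoo
    _ = ellK' k - ellE' k := hKE.symm
end

section
/- For every k ∈ (0,1) and every x ∈ ℝ, the incomplete integrals satisfy the strict bounds |𝔉_k(x)| < K'(k) and |𝔈_k(x)| < K'(k) − E'(k). -/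
open Real

/-- Incomplete integral 𝔉_k. -/
noncomputable def incF (k x : ℝ) : ℝ :=
  ∫ t in (0:ℝ)..x, 1 / Real.sqrt ((1 + t^2) * (1 + k^2 * t^2))

/-- Incomplete integral 𝔈_k. -/
noncomputable def incE (k x : ℝ) : ℝ :=
  ∫ t in (0:ℝ)..x,
    (1 - k^2) / (Real.sqrt (1 + t^2) * (Real.sqrt (1 + k^2 * t^2) + k * Real.sqrt (1 + t^2)))


section Aux


variable {k : ℝ}

lemma aux_c_pos (hk0 : 0 < k) (hk1 : k < 1) (θ : ℝ) :
    0 < Real.cos θ^2 + k^2 * Real.sin θ^2 := by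
  nlinarith [Real.sin_sq_add_cos_sq θ, sq_nonneg (Real.sin θ),
    mul_nonneg (by nlinarith : (0:ℝ) ≤ 1 - k^2) (sq_nonneg (Real.cos θ)), mul_pos hk0 hk0]

lemma aux_abs_int (g : ℝ → ℝ) (hpos : ∀ θ, 0 ≤ g θ)
    (heven : ∀ θ, g (-θ) = g θ) (a : ℝ) :
    |∫ θ in (0:ℝ)..a, g θ| = ∫ θ in (0:ℝ)..|a|, g θ := by
  rcases le_or_gt 0 a with h | h
  · rw [abs_of_nonneg h, abs_of_nonneg (intervalIntegral.integral_nonneg h (fun x _ => hpos x))]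
  · rw [abs_of_neg h]
    have h1 : ∫ θ in (0:ℝ)..(-a), g θ = ∫ θ in (0:ℝ)..(-a), g (-θ) := by
      apply intervalIntegral.integral_congr
      intro θ _; show g θ = g (-θ); rw [heven]
    have h2 := intervalIntegral.integral_comp_neg (a := (0:ℝ)) (b := -a) g
    simp only [neg_neg, neg_zero] at h2
    have key : ∫ θ in (0:ℝ)..(-a), g θ = ∫ θ in a..(0:ℝ), g θ := h1.trans h2
    have hnn : (0:ℝ) ≤ ∫ θ in a..(0:ℝ), g θ :=
      intervalIntegral.integral_nonneg (by linarith) (fun x _ => hpos x)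
    rw [key, intervalIntegral.integral_symm, abs_neg, abs_of_nonneg hnn]

lemma aux_lt (g : ℝ → ℝ) (hg : Continuous g) (hpos : ∀ θ, 0 < g θ) {b : ℝ}
    (hb : b < π/2) :
    ∫ θ in (0:ℝ)..b, g θ < ∫ θ in (0:ℝ)..(π/2), g θ := by
  have hi1 : IntervalIntegrable g MeasureTheory.volume 0 b := hg.intervalIntegrable _ _
  have hi2 : IntervalIntegrable g MeasureTheory.volume b (π/2) := hg.intervalIntegrable _ _
  have hadd := intervalIntegral.integral_add_adjacent_intervals hi1 hi2
  have hpos2 : 0 < ∫ θ in b..(π/2), g θ :=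
    intervalIntegral.intervalIntegral_pos_of_pos_on hi2 (fun x _ => hpos x) hb
  linarith

lemma aux_mem_Ioo {x θ : ℝ} (hθ : θ ∈ Set.uIcc 0 (Real.arctan x)) :
    θ ∈ Set.Ioo (-(π/2)) (π/2) := by
  rw [Set.mem_uIcc] at hθ
  have h1 := Real.arctan_lt_pi_div_two x
  have h2 := Real.neg_pi_div_two_lt_arctan x
  have h3 := Real.pi_pos
  rcases hθ with ⟨h, h'⟩ | ⟨h, h'⟩ <;> constructor <;> nlinarith

lemma aux_subst (f : ℝ → ℝ) (hf : Continuous f) (x : ℝ) :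
    ∫ t in (0:ℝ)..x, f t
      = ∫ θ in (0:ℝ)..(Real.arctan x), (1 / Real.cos θ^2) * f (Real.tan θ) := by
  have h := intervalIntegral.integral_comp_smul_deriv (a := 0) (b := Real.arctan x)
    (f := Real.tan) (f' := fun θ => 1 / Real.cos θ^2) (g := f)
    (fun θ hθ => Real.hasDerivAt_tan (Real.cos_pos_of_mem_Ioo (aux_mem_Ioo hθ)).ne')
    (by
      apply ContinuousOn.div continuousOn_const (by fun_prop)
      intro θ hθ
      exact pow_ne_zero 2 (Real.cos_pos_of_mem_Ioo (aux_mem_Ioo hθ)).ne') hf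
  rw [Real.tan_zero, Real.tan_arctan] at h
  rw [← h]
  simp [smul_eq_mul]

lemma comp_F (hk0 : 0 < k) (hk1 : k < 1) {θ : ℝ} (hc : 0 < Real.cos θ) :
    (1 / Real.cos θ^2) * (1 / Real.sqrt ((1 + Real.tan θ^2) * (1 + k^2 * Real.tan θ^2)))
      = 1 / Real.sqrt (Real.cos θ^2 + k^2 * Real.sin θ^2) := by
  have hcp := aux_c_pos hk0 hk1 θ
  have hc2 : Real.cos θ ≠ 0 := hc.ne'
  have key : (1 + Real.tan θ^2) * (1 + k^2 * Real.tan θ^2)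
      = (Real.cos θ^2 + k^2 * Real.sin θ^2) / (Real.cos θ^2)^2 := by
    rw [eq_div_iff (by positivity), Real.tan_eq_sin_div_cos]
    field_simp
    exact Real.cos_sq_add_sin_sq θ
  rw [key, Real.sqrt_div hcp.le, Real.sqrt_sq (sq_nonneg _)]
  have hs : Real.sqrt (Real.cos θ^2 + k^2 * Real.sin θ^2) ≠ 0 :=
    (Real.sqrt_pos.mpr hcp).ne'
  field_simp

lemma comp_E (hk0 : 0 < k) (hk1 : k < 1) {θ : ℝ} (hc : 0 < Real.cos θ) :
    (1 / Real.cos θ^2) * ((1 - k^2) / (Real.sqrt (1 + Real.tan θ^2)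
        * (Real.sqrt (1 + k^2 * Real.tan θ^2) + k * Real.sqrt (1 + Real.tan θ^2))))
      = (1 - k^2) / (Real.sqrt (Real.cos θ^2 + k^2 * Real.sin θ^2) + k) := by
  have hcp := aux_c_pos hk0 hk1 θ
  have hc2 : Real.cos θ ≠ 0 := hc.ne'
  have h1 : (1 + Real.tan θ^2) = (1 / Real.cos θ)^2 := by
    rw [div_pow, one_pow, one_div, ← Real.inv_one_add_tan_sq hc2, inv_inv]
  have h2 : (1 + k^2 * Real.tan θ^2) = (Real.cos θ^2 + k^2 * Real.sin θ^2) / (Real.cos θ)^2 := by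
    rw [eq_div_iff (by positivity), Real.tan_eq_sin_div_cos]
    field_simp
  rw [h1, h2, Real.sqrt_sq (by positivity), Real.sqrt_div hcp.le, Real.sqrt_sq hc.le]
  have hs : 0 < Real.sqrt (Real.cos θ^2 + k^2 * Real.sin θ^2) := Real.sqrt_pos.mpr hcp
  have hsk : Real.sqrt (Real.cos θ^2 + k^2 * Real.sin θ^2) + k ≠ 0 := by positivity
  field_simp

lemma cont_sqrtc (k : ℝ) :
    Continuous (fun θ => Real.sqrt (Real.cos θ^2 + k^2 * Real.sin θ^2)) :=
  Real.continuous_sqrt.comp (by continuity)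

lemma cont_g1 (hk0 : 0 < k) (hk1 : k < 1) :
    Continuous (fun θ => 1 / Real.sqrt (Real.cos θ^2 + k^2 * Real.sin θ^2)) :=
  continuous_const.div (cont_sqrtc k)
    (fun θ => (Real.sqrt_pos.mpr (aux_c_pos hk0 hk1 θ)).ne')

lemma cont_g2 (hk0 : 0 < k) (hk1 : k < 1) :
    Continuous (fun θ => (1 - k^2) / (Real.sqrt (Real.cos θ^2 + k^2 * Real.sin θ^2) + k)) :=
  continuous_const.div ((cont_sqrtc k).add continuous_const)
    (fun θ => by positivity)

lemma aux_K' (hk0 : 0 < k) (hk1 : k < 1) :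
    ellK' k = ∫ θ in (0:ℝ)..(π/2), 1 / Real.sqrt (Real.cos θ^2 + k^2 * Real.sin θ^2) := by
  unfold ellK' ellK
  apply intervalIntegral.integral_congr
  intro θ _
  have h : Real.sqrt (1 - k^2) ^ 2 = 1 - k^2 := Real.sq_sqrt (by nlinarith)
  have h2 : 1 - Real.sqrt (1 - k^2)^2 * Real.sin θ^2
      = Real.cos θ^2 + k^2 * Real.sin θ^2 := by
    rw [h]; nlinarith [Real.sin_sq_add_cos_sq θ]
  simp only [h2]

lemma aux_E' (hk0 : 0 < k) (hk1 : k < 1) :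
    ellE' k = ∫ θ in (0:ℝ)..(π/2), Real.sqrt (Real.cos θ^2 + k^2 * Real.sin θ^2) := by
  unfold ellE' ellE
  apply intervalIntegral.integral_congr
  intro θ _
  have h : Real.sqrt (1 - k^2) ^ 2 = 1 - k^2 := Real.sq_sqrt (by nlinarith)
  have h2 : 1 - Real.sqrt (1 - k^2)^2 * Real.sin θ^2
      = Real.cos θ^2 + k^2 * Real.sin θ^2 := by
    rw [h]; nlinarith [Real.sin_sq_add_cos_sq θ]
  simp only [h2]

lemma aux_KE' (hk0 : 0 < k) (hk1 : k < 1) :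
    ellK' k - ellE' k
      = ∫ θ in (0:ℝ)..(π/2),
          (1 - k^2) * Real.sin θ^2 / Real.sqrt (Real.cos θ^2 + k^2 * Real.sin θ^2) := by
  rw [aux_K' hk0 hk1, aux_E' hk0 hk1,
    ← intervalIntegral.integral_sub ((cont_g1 hk0 hk1).intervalIntegrable _ _)
      ((cont_sqrtc k).intervalIntegrable _ _)]
  apply intervalIntegral.integral_congr
  intro θ _
  have hcp := aux_c_pos hk0 hk1 θ
  have hs : 0 < Real.sqrt (Real.cos θ^2 + k^2 * Real.sin θ^2) := Real.sqrt_pos.mpr hcp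
  have hss : Real.sqrt (Real.cos θ^2 + k^2 * Real.sin θ^2)
      * Real.sqrt (Real.cos θ^2 + k^2 * Real.sin θ^2)
      = Real.cos θ^2 + k^2 * Real.sin θ^2 := Real.mul_self_sqrt hcp.le
  have h1 : 1 - (Real.cos θ^2 + k^2 * Real.sin θ^2) = (1 - k^2) * Real.sin θ^2 := by
    nlinarith [Real.sin_sq_add_cos_sq θ]
  show 1 / Real.sqrt (Real.cos θ^2 + k^2 * Real.sin θ^2)
      - Real.sqrt (Real.cos θ^2 + k^2 * Real.sin θ^2)
      = (1 - k^2) * Real.sin θ^2 / Real.sqrt (Real.cos θ^2 + k^2 * Real.sin θ^2)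
  rw [div_sub' hs.ne', eq_div_iff hs.ne', div_mul_cancel₀ _ hs.ne', hss]
  linarith

lemma aux_deriv (hk0 : 0 < k) (hk1 : k < 1) (θ : ℝ) :
    HasDerivAt (fun θ => (1-k^2) * (Real.sin θ * Real.cos θ)
        / (Real.sqrt (Real.cos θ^2 + k^2 * Real.sin θ^2) + k))
      ((1-k^2) / (Real.sqrt (Real.cos θ^2 + k^2 * Real.sin θ^2) + k)
        - (1-k^2) * Real.sin θ^2 / Real.sqrt (Real.cos θ^2 + k^2 * Real.sin θ^2)) θ := by
  have hcp := aux_c_pos hk0 hk1 θ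
  have hr : 0 < Real.sqrt (Real.cos θ^2 + k^2 * Real.sin θ^2) := Real.sqrt_pos.mpr hcp
  have hcd : HasDerivAt (fun θ => Real.cos θ^2 + k^2 * Real.sin θ^2)
      (2 * Real.cos θ ^ 1 * (-Real.sin θ) + k^2 * (2 * Real.sin θ ^ 1 * Real.cos θ)) θ :=
    ((Real.hasDerivAt_cos θ).pow 2).add (((Real.hasDerivAt_sin θ).pow 2).const_mul (k^2))
  have hrd := (hcd.sqrt hcp.ne').add_const k
  have hnum : HasDerivAt (fun θ => (1-k^2) * (Real.sin θ * Real.cos θ))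
      ((1-k^2) * (Real.cos θ * Real.cos θ + Real.sin θ * (-Real.sin θ))) θ :=
    ((Real.hasDerivAt_sin θ).mul (Real.hasDerivAt_cos θ)).const_mul (1-k^2)
  have hden_ne : Real.sqrt (Real.cos θ^2 + k^2 * Real.sin θ^2) + k ≠ 0 := by positivity
  have h := hnum.fun_div hrd hden_ne
  refine h.congr_deriv ?_
  symm
  set r := Real.sqrt (Real.cos θ^2 + k^2 * Real.sin θ^2) with hrdef
  have hr2 : r^2 = Real.cos θ^2 + k^2 * Real.sin θ^2 := Real.sq_sqrt hcp.le
  have hpy : Real.sin θ^2 + Real.cos θ^2 = 1 := Real.sin_sq_add_cos_sq θ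
  field_simp
  linear_combination ((1-k^2)*Real.sin θ^2) * hr2
    + ((1-k^2)*(k^2*Real.sin θ^2 - r*(r+k))) * hpy

lemma cont_H (hk0 : 0 < k) (hk1 : k < 1) :
    Continuous (fun θ =>
      (1-k^2) * Real.sin θ^2 / Real.sqrt (Real.cos θ^2 + k^2 * Real.sin θ^2)) :=
  Continuous.div (by continuity) (cont_sqrtc k)
    (fun θ => (Real.sqrt_pos.mpr (aux_c_pos hk0 hk1 θ)).ne')

lemma aux_ftc (hk0 : 0 < k) (hk1 : k < 1) :
    ∫ θ in (0:ℝ)..(π/2),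
        (1-k^2) * Real.sin θ^2 / Real.sqrt (Real.cos θ^2 + k^2 * Real.sin θ^2)
      = ∫ θ in (0:ℝ)..(π/2),
        (1-k^2) / (Real.sqrt (Real.cos θ^2 + k^2 * Real.sin θ^2) + k) := by
  have hH := cont_H hk0 hk1
  have hG := cont_g2 hk0 hk1
  have key := intervalIntegral.integral_eq_sub_of_hasDerivAt
    (f := fun θ => (1-k^2) * (Real.sin θ * Real.cos θ)
        / (Real.sqrt (Real.cos θ^2 + k^2 * Real.sin θ^2) + k))
    (f' := fun θ => (1-k^2) / (Real.sqrt (Real.cos θ^2 + k^2 * Real.sin θ^2) + k)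
        - (1-k^2) * Real.sin θ^2 / Real.sqrt (Real.cos θ^2 + k^2 * Real.sin θ^2))
    (a := 0) (b := π/2)
    (fun θ _ => aux_deriv hk0 hk1 θ)
    ((hG.sub hH).intervalIntegrable _ _)
  rw [intervalIntegral.integral_sub (hG.intervalIntegrable _ _)
    (hH.intervalIntegrable _ _)] at key
  have h0 : (1-k^2) * (Real.sin (π/2) * Real.cos (π/2))
        / (Real.sqrt (Real.cos (π/2)^2 + k^2 * Real.sin (π/2)^2) + k)
      - (1-k^2) * (Real.sin 0 * Real.cos 0)
        / (Real.sqrt (Real.cos 0^2 + k^2 * Real.sin 0^2) + k) = 0 := by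
    simp [Real.cos_pi_div_two, Real.sin_zero]
  rw [h0] at key
  linarith

end Aux


theorem stmt_4 (k : ℝ) (hk : k ∈ Set.Ioo (0:ℝ) 1) (x : ℝ) :
    |incF k x| < ellK' k ∧ |incE k x| < ellK' k - ellE' k := by
  obtain ⟨hk0, hk1⟩ := hk
  have hk2 : (0:ℝ) < 1 - k^2 := by nlinarith
  -- continuity of the t-integrands
  have hfc : Continuous (fun t : ℝ => 1 / Real.sqrt ((1+t^2)*(1+k^2*t^2))) := by
    apply continuous_const.div
    · exact Real.continuous_sqrt.comp (by continuity)
    · intro t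
      have h1 : (0:ℝ) < (1+t^2)*(1+k^2*t^2) := by positivity
      exact (Real.sqrt_pos.mpr h1).ne'
  have hhc : Continuous (fun t : ℝ =>
      (1-k^2) / (Real.sqrt (1+t^2) * (Real.sqrt (1+k^2*t^2) + k*Real.sqrt (1+t^2)))) := by
    apply continuous_const.div
    · exact (Real.continuous_sqrt.comp (by continuity)).mul
        (((Real.continuous_sqrt.comp (by continuity))).add
          (continuous_const.mul (Real.continuous_sqrt.comp (by continuity))))
    · intro t
      have h1 : (0:ℝ) < 1 + t^2 := by positivity
      have h2 : (0:ℝ) < 1 + k^2*t^2 := by positivity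
      have h3 : 0 < Real.sqrt (1+t^2) := Real.sqrt_pos.mpr h1
      have h4 : 0 < Real.sqrt (1+k^2*t^2) := Real.sqrt_pos.mpr h2
      positivity
  -- substitution
  have hF : incF k x = ∫ θ in (0:ℝ)..(Real.arctan x),
      1 / Real.sqrt (Real.cos θ^2 + k^2 * Real.sin θ^2) := by
    rw [incF, aux_subst _ hfc x]
    apply intervalIntegral.integral_congr
    intro θ hθ
    exact comp_F hk0 hk1 (Real.cos_pos_of_mem_Ioo (aux_mem_Ioo hθ))
  have hE : incE k x = ∫ θ in (0:ℝ)..(Real.arctan x),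
      (1-k^2) / (Real.sqrt (Real.cos θ^2 + k^2 * Real.sin θ^2) + k) := by
    rw [incE, aux_subst _ hhc x]
    apply intervalIntegral.integral_congr
    intro θ hθ
    exact comp_E hk0 hk1 (Real.cos_pos_of_mem_Ioo (aux_mem_Ioo hθ))
  -- positivity and evenness of the θ-integrands
  have hpos1 : ∀ θ, 0 < 1 / Real.sqrt (Real.cos θ^2 + k^2 * Real.sin θ^2) := fun θ =>
    one_div_pos.mpr (Real.sqrt_pos.mpr (aux_c_pos hk0 hk1 θ))
  have hpos2 : ∀ θ, 0 <
      (1-k^2) / (Real.sqrt (Real.cos θ^2 + k^2 * Real.sin θ^2) + k) := fun θ =>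
    div_pos hk2 (by positivity)
  have heven1 : ∀ θ, (1:ℝ) / Real.sqrt (Real.cos (-θ)^2 + k^2 * Real.sin (-θ)^2)
      = 1 / Real.sqrt (Real.cos θ^2 + k^2 * Real.sin θ^2) := by
    intro θ; rw [Real.cos_neg, Real.sin_neg, neg_sq]
  have heven2 : ∀ θ, (1-k^2) / (Real.sqrt (Real.cos (-θ)^2 + k^2 * Real.sin (-θ)^2) + k)
      = (1-k^2) / (Real.sqrt (Real.cos θ^2 + k^2 * Real.sin θ^2) + k) := by
    intro θ; rw [Real.cos_neg, Real.sin_neg, neg_sq]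
  have habs : |Real.arctan x| < π/2 :=
    abs_lt.mpr ⟨Real.neg_pi_div_two_lt_arctan x, Real.arctan_lt_pi_div_two x⟩
  constructor
  · rw [hF, aux_abs_int _ (fun θ => (hpos1 θ).le) heven1, aux_K' hk0 hk1]
    exact aux_lt _ (cont_g1 hk0 hk1) hpos1 habs
  · rw [hE, aux_abs_int _ (fun θ => (hpos2 θ).le) heven2, aux_KE' hk0 hk1,
      aux_ftc hk0 hk1]
    exact aux_lt _ (cont_g2 hk0 hk1) hpos2 habs
end

section
/- For every fixed p > 0 and k ∈ (0,1), the function (u,v) ↦ T₀(p,k,u,v), defined on the set of pairs of real numbers with u ≠ v, is surjective onto ℝ; that is, for every t ∈ ℝ there exist real numbers u ≠ v with T₀(p,k,u,v) = t. -/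
set_option maxHeartbeats 1000000


open Real

/-- The function w_k(x) = √((1+x²)(1+k²x²)). -/
noncomputable def wk (k x : ℝ) : ℝ := Real.sqrt ((1 + x^2) * (1 + k^2 * x^2))

/-- The function T₀. -/
noncomputable def T₀ (p k u v : ℝ) : ℝ :=
  (2/π) * ( p * (ellE k * incF k v - ellK k * incE k v)
    - (ellE k * incF k u - ellK k * incE k u)
    - ellK k * ( p * (wk k v / (u - v) + k * v) + (wk k u / (u - v) - k * u) ) )

section Aux

variable {k : ℝ}

lemma contFk (hk0 : 0 < k) :
    Continuous (fun t : ℝ => 1 / Real.sqrt ((1 + t^2) * (1 + k^2 * t^2))) := by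
  apply continuous_const.div
  · fun_prop
  · intro t
    positivity

lemma contEk (hk0 : 0 < k) :
    Continuous (fun t : ℝ => (1 - k^2) /
      (Real.sqrt (1 + t^2) * (Real.sqrt (1 + k^2 * t^2) + k * Real.sqrt (1 + t^2)))) := by
  apply continuous_const.div
  · fun_prop
  · intro t
    positivity

lemma contIncF (hk0 : 0 < k) : Continuous (incF k) := by
  unfold incF
  exact intervalIntegral.continuous_primitive
    (fun a b => (contFk hk0).intervalIntegrable a b) 0

lemma contIncE (hk0 : 0 < k) : Continuous (incE k) := by
  unfold incE
  exact intervalIntegral.continuous_primitive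
    (fun a b => (contEk hk0).intervalIntegrable a b) 0

lemma contWk : Continuous (wk k) := by
  unfold wk
  fun_prop

lemma incF_neg (k s : ℝ) : incF k (-s) = - incF k s := by
  unfold incF
  have h := intervalIntegral.integral_comp_neg (a := (0:ℝ)) (b := s)
    (f := fun t : ℝ => 1 / Real.sqrt ((1 + t^2) * (1 + k^2 * t^2)))
  simp only [neg_sq, neg_zero] at h
  rw [intervalIntegral.integral_symm 0 (-s)] at h
  linarith

lemma incE_neg (k s : ℝ) : incE k (-s) = - incE k s := by
  unfold incE
  have h := intervalIntegral.integral_comp_neg (a := (0:ℝ)) (b := s)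
    (f := fun t : ℝ => (1 - k^2) /
      (Real.sqrt (1 + t^2) * (Real.sqrt (1 + k^2 * t^2) + k * Real.sqrt (1 + t^2))))
  simp only [neg_sq, neg_zero] at h
  rw [intervalIntegral.integral_symm 0 (-s)] at h
  linarith

lemma wk_neg (k s : ℝ) : wk k (-s) = wk k s := by
  unfold wk
  rw [neg_sq]

lemma one_le_wk (k s : ℝ) : 1 ≤ wk k s := by
  unfold wk
  have h1 : (1:ℝ)^2 ≤ (1 + s^2) * (1 + k^2 * s^2) := by
    nlinarith [sq_nonneg s, sq_nonneg (k*s), mul_nonneg (sq_nonneg s) (sq_nonneg (k*s))]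
  exact Real.le_sqrt_of_sq_le h1

lemma wk_le (hk : k ∈ Set.Ioo (0:ℝ) 1) (s : ℝ) : wk k s ≤ k * s^2 + 1/k := by
  obtain ⟨hk0, hk1⟩ := hk
  have ha : (0:ℝ) ≤ k * s^2 + 1/k := by positivity
  have h1 : (1:ℝ) ≤ 1/k := by
    rw [le_div_iff₀ hk0]; linarith
  have hinv : k * (1/k) = 1 := by field_simp
  have key : (1 + s^2) * (1 + k^2 * s^2) ≤ (k * s^2 + 1/k)^2 := by
    nlinarith [sq_nonneg s, sq_nonneg (k*s), sq_nonneg (k*s^2)]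
  calc wk k s ≤ Real.sqrt ((k * s^2 + 1/k)^2) := Real.sqrt_le_sqrt key
    _ = k * s^2 + 1/k := Real.sqrt_sq ha

lemma incF_bounds (hk : k ∈ Set.Ioo (0:ℝ) 1) {s : ℝ} (hs : 0 ≤ s) :
    0 ≤ incF k s ∧ incF k s ≤ π / (2*k) := by
  obtain ⟨hk0, hk1⟩ := hk
  constructor
  · apply intervalIntegral.integral_nonneg hs
    intro t _
    positivity
  · have hle : ∀ t ∈ Set.Icc (0:ℝ) s,
        1 / Real.sqrt ((1 + t^2) * (1 + k^2 * t^2)) ≤ 1/k * (1/(1 + t^2)) := by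
      intro t _
      have h1 : k * (1 + t^2) ≤ Real.sqrt ((1 + t^2) * (1 + k^2 * t^2)) := by
        apply Real.le_sqrt_of_sq_le
        have h0 : (0:ℝ) ≤ (1 + t^2) * (1 - k^2) :=
          mul_nonneg (by positivity) (by nlinarith)
        nlinarith [sq_nonneg t, sq_nonneg (k*t), h0,
          mul_nonneg (sq_nonneg t) (mul_nonneg (by positivity : (0:ℝ) ≤ 1 + t^2) (by nlinarith : (0:ℝ) ≤ 1 - k^2))]
      have h2 : (0:ℝ) < k * (1 + t^2) := by positivity
      calc 1 / Real.sqrt ((1 + t^2) * (1 + k^2 * t^2)) ≤ 1 / (k * (1 + t^2)) :=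
            one_div_le_one_div_of_le h2 h1
        _ = 1/k * (1/(1 + t^2)) := by rw [one_div_mul_one_div]
    have hcont2 : Continuous (fun t : ℝ => 1/k * (1/(1 + t^2))) := by
      apply continuous_const.mul
      apply continuous_const.div (by fun_prop)
      intro t; positivity
    calc incF k s ≤ ∫ t in (0:ℝ)..s, 1/k * (1/(1 + t^2)) := by
          exact intervalIntegral.integral_mono_on hs
            ((contFk hk0).intervalIntegrable 0 s)
            (hcont2.intervalIntegrable 0 s) hle
      _ = 1/k * (arctan s - arctan 0) := by
          rw [intervalIntegral.integral_const_mul, integral_one_div_one_add_sq]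
      _ ≤ π / (2*k) := by
          rw [arctan_zero, sub_zero]
          have h3 : arctan s ≤ π/2 := le_of_lt (arctan_lt_pi_div_two s)
          have h4 : (0:ℝ) ≤ 1/k := by positivity
          calc 1/k * arctan s ≤ 1/k * (π/2) := mul_le_mul_of_nonneg_left h3 h4
            _ = π / (2*k) := by ring

lemma incE_bounds (hk : k ∈ Set.Ioo (0:ℝ) 1) {s : ℝ} (hs : 0 ≤ s) :
    0 ≤ incE k s ∧ incE k s ≤ (1 - k^2) * (π / (2*k)) := by
  obtain ⟨hk0, hk1⟩ := hk
  have hk2 : (0:ℝ) ≤ 1 - k^2 := by nlinarith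
  constructor
  · apply intervalIntegral.integral_nonneg hs
    intro t _
    positivity
  · have hle : ∀ t ∈ Set.Icc (0:ℝ) s,
        (1 - k^2) / (Real.sqrt (1 + t^2) * (Real.sqrt (1 + k^2 * t^2) + k * Real.sqrt (1 + t^2)))
          ≤ (1 - k^2)/k * (1/(1 + t^2)) := by
      intro t _
      have hsq : Real.sqrt (1 + t^2) * Real.sqrt (1 + t^2) = 1 + t^2 :=
        Real.mul_self_sqrt (by positivity)
      have h1 : k * (1 + t^2) ≤
          Real.sqrt (1 + t^2) * (Real.sqrt (1 + k^2 * t^2) + k * Real.sqrt (1 + t^2)) := by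
        have h2 : Real.sqrt (1 + t^2) * (k * Real.sqrt (1 + t^2)) ≤
            Real.sqrt (1 + t^2) * (Real.sqrt (1 + k^2 * t^2) + k * Real.sqrt (1 + t^2)) := by
          apply mul_le_mul_of_nonneg_left _ (Real.sqrt_nonneg _)
          have := Real.sqrt_nonneg (1 + k^2 * t^2)
          linarith
        calc k * (1 + t^2) = Real.sqrt (1 + t^2) * (k * Real.sqrt (1 + t^2)) := by
              linear_combination (-k) * hsq
          _ ≤ _ := h2
      have h2 : (0:ℝ) < k * (1 + t^2) := by positivity
      calc (1 - k^2) / (Real.sqrt (1 + t^2) *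
            (Real.sqrt (1 + k^2 * t^2) + k * Real.sqrt (1 + t^2)))
          ≤ (1 - k^2) / (k * (1 + t^2)) := div_le_div_of_nonneg_left hk2 h2 h1
        _ = (1 - k^2)/k * (1/(1 + t^2)) := by
            field_simp
    have hcont2 : Continuous (fun t : ℝ => (1 - k^2)/k * (1/(1 + t^2))) := by
      apply continuous_const.mul
      apply continuous_const.div (by fun_prop)
      intro t; positivity
    calc incE k s ≤ ∫ t in (0:ℝ)..s, (1 - k^2)/k * (1/(1 + t^2)) := by
          exact intervalIntegral.integral_mono_on hs
            ((contEk hk0).intervalIntegrable 0 s)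
            (hcont2.intervalIntegrable 0 s) hle
      _ = (1 - k^2)/k * (arctan s - arctan 0) := by
          rw [intervalIntegral.integral_const_mul, integral_one_div_one_add_sq]
      _ ≤ (1 - k^2) * (π / (2*k)) := by
          rw [arctan_zero, sub_zero]
          have h3 : arctan s ≤ π/2 := le_of_lt (arctan_lt_pi_div_two s)
          have h4 : (0:ℝ) ≤ (1 - k^2)/k := by positivity
          calc (1 - k^2)/k * arctan s ≤ (1 - k^2)/k * (π/2) :=
                mul_le_mul_of_nonneg_left h3 h4
            _ = (1 - k^2) * (π / (2*k)) := by ring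

lemma ellK_pos (hk : k ∈ Set.Ioo (0:ℝ) 1) : 0 < ellK k := by
  obtain ⟨hk0, hk1⟩ := hk
  have hden : ∀ θ : ℝ, 0 < 1 - k^2 * Real.sin θ ^ 2 := by
    intro θ
    nlinarith [Real.sin_sq_le_one θ, sq_nonneg (Real.sin θ), sq_nonneg (k * Real.sin θ)]
  have hcont : Continuous (fun θ : ℝ => 1 / Real.sqrt (1 - k^2 * Real.sin θ ^ 2)) := by
    apply continuous_const.div
    · fun_prop
    · intro θ
      exact ne_of_gt (Real.sqrt_pos.2 (hden θ))
  have hge : ∀ θ ∈ Set.Icc (0:ℝ) (π/2), (1:ℝ) ≤ 1 / Real.sqrt (1 - k^2 * Real.sin θ ^ 2) := by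
    intro θ _
    apply one_le_one_div
    · exact Real.sqrt_pos.2 (hden θ)
    · calc Real.sqrt (1 - k^2 * Real.sin θ ^ 2) ≤ Real.sqrt 1 :=
            Real.sqrt_le_sqrt (by nlinarith [sq_nonneg (k * Real.sin θ)])
        _ = 1 := Real.sqrt_one
  have hpi : (0:ℝ) ≤ π/2 := by positivity
  have h1 : (∫ _ in (0:ℝ)..(π/2), (1:ℝ)) ≤ ellK k := by
    unfold ellK
    exact intervalIntegral.integral_mono_on hpi intervalIntegrable_const
      (hcont.intervalIntegrable 0 (π/2)) hge
  simp only [intervalIntegral.integral_const, smul_eq_mul, mul_one, sub_zero] at h1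
  have h2 : (0:ℝ) < π/2 := by positivity
  linarith

end Aux

theorem stmt_6 (p k : ℝ) (hp : 0 < p) (hk : k ∈ Set.Ioo (0:ℝ) 1) (t : ℝ) :
    ∃ u v : ℝ, u ≠ v ∧ T₀ p k u v = t := by
  obtain ⟨hk0, hk1⟩ := id hk
  set E := ellE k with hE
  set K := ellK k with hKdef
  clear_value E K
  have hK : 0 < K := by rw [hKdef]; exact ellK_pos hk
  have hπ : (0:ℝ) < π := Real.pi_pos
  have hπ' : π ≠ 0 := ne_of_gt hπ
  -- the one-variable reduction along the path (u,v) = (s,-s)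
  set F : ℝ → ℝ := fun s =>
    (2/π) * (p+1) * (-(E * incF k s - K * incE k s) - K * (wk k s / (2*s) - k * s)) with hFdef
  clear_value F
  have key : ∀ s : ℝ, s ≠ 0 → T₀ p k s (-s) = F s := by
    intro s hs
    unfold T₀
    rw [incF_neg, incE_neg, wk_neg]
    rw [show s - -s = 2*s by ring]
    simp only [hFdef]
    rw [← hE, ← hKdef]
    have h2s : (2:ℝ)*s ≠ 0 := by
      simp [hs]
    field_simp
    ring
  -- continuity of F on (0,∞)
  have hFcont : ContinuousOn F (Set.Ioi (0:ℝ)) := by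
    simp only [hFdef]
    apply continuousOn_const.mul
    apply ContinuousOn.sub
    · exact ((continuous_const.mul (contIncF hk0)).sub
        (continuous_const.mul (contIncE hk0))).neg.continuousOn
    · apply continuousOn_const.mul
      apply ContinuousOn.sub
      · apply ContinuousOn.div contWk.continuousOn
          (continuous_const.mul continuous_id).continuousOn
        intro x hx
        have hx' : (0:ℝ) < x := hx
        have hx2 : (2:ℝ) * x ≠ 0 := by positivity
        simpa using hx2
      · exact (continuous_const.mul continuous_id).continuousOn
  -- bound on the elliptic-primitive part
  set B : ℝ := |E| * (π / (2*k)) + K * ((1 - k^2) * (π / (2*k))) with hBdef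
  clear_value B
  have hD : ∀ s : ℝ, 0 < s → |E * incF k s - K * incE k s| ≤ B := by
    intro s hs
    obtain ⟨hF1, hF2⟩ := incF_bounds hk hs.le
    obtain ⟨hE1, hE2⟩ := incE_bounds hk hs.le
    rw [abs_le]
    constructor
    · rw [hBdef]
      nlinarith [le_abs_self E, neg_abs_le E, abs_nonneg E, hK.le,
        mul_le_mul_of_nonneg_left hF2 (abs_nonneg E),
        mul_le_mul_of_nonneg_left hE2 hK.le,
        mul_nonneg hK.le hE1, mul_nonneg (abs_nonneg E) hF1]
    · rw [hBdef]
      nlinarith [le_abs_self E, neg_abs_le E, abs_nonneg E, hK.le,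
        mul_le_mul_of_nonneg_left hF2 (abs_nonneg E),
        mul_le_mul_of_nonneg_left hE2 hK.le,
        mul_nonneg hK.le hE1, mul_nonneg (abs_nonneg E) hF1]
  have hBpos : 0 ≤ B := by
    rw [hBdef]
    have hksq : (0:ℝ) ≤ 1 - k^2 := by nlinarith
    positivity
  set c : ℝ := (2/π) * (p+1) with hcdef
  clear_value c
  have hc : 0 < c := by
    rw [hcdef]; positivity
  set R : ℝ := c * (B + K * k) with hRdef
  clear_value R
  -- a point a > 0 where F a ≤ t
  obtain ⟨a, ha0, haF⟩ : ∃ a : ℝ, 0 < a ∧ F a ≤ t := by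
    refine ⟨min 1 (c*K / (2*(|R - t| + 1))), lt_min one_pos (by positivity), ?_⟩
    set a := min 1 (c*K / (2*(|R - t| + 1))) with hadef
    clear_value a
    have ha0 : 0 < a := hadef ▸ lt_min one_pos (by positivity)
    have ha1 : a ≤ 1 := hadef ▸ min_le_left _ _
    have ha2 : a ≤ c*K / (2*(|R - t| + 1)) := hadef ▸ min_le_right _ _
    rw [le_div_iff₀ (by positivity)] at ha2
    have hDa := hD a ha0
    have hwk : 1 ≤ wk k a := one_le_wk k a
    have g1 : 1/(2*a) ≤ wk k a/(2*a) :=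
      (div_le_div_iff_of_pos_right (by positivity : (0:ℝ) < 2*a)).2 hwk
    have g2 : -(E * incF k a - K * incE k a) - K * (wk k a / (2*a) - k * a)
        ≤ B + K*k - K * (1/(2*a)) := by
      have h1 : K * (1/(2*a)) ≤ K * (wk k a/(2*a)) := mul_le_mul_of_nonneg_left g1 hK.le
      have h2 : K * k * a ≤ K * k := by
        nlinarith [mul_nonneg hK.le hk0.le]
      have h3 : -(E * incF k a - K * incE k a) ≤ B := by
        have := (abs_le.1 hDa).1
        linarith
      nlinarith
    have g3 : F a ≤ c * (B + K*k - K * (1/(2*a))) := by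
      simp only [hFdef]
      exact mul_le_mul_of_nonneg_left g2 hc.le
    have g4 : |R - t| + 1 ≤ c * K * (1/(2*a)) := by
      rw [show c * K * (1/(2*a)) = c*K/(2*a) by ring, le_div_iff₀ (by positivity)]
      nlinarith
    have g5 : c * (B + K*k - K * (1/(2*a))) = R - c * K * (1/(2*a)) := by
      rw [hRdef]; ring
    have g6 : R - t ≤ |R - t| := le_abs_self _
    linarith
  -- a point b > 0 where t ≤ F b
  obtain ⟨b, hb0, hbF⟩ : ∃ b : ℝ, 0 < b ∧ t ≤ F b := by
    set M : ℝ := |t| + c*B + c*K*(1/k)/2 + 1 with hMdef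
    clear_value M
    have hM : 0 < M := by
      rw [hMdef]
      have hM1 : (0:ℝ) ≤ c*B := mul_nonneg hc.le hBpos
      have hM2 : (0:ℝ) ≤ c*K*(1/k)/2 := by positivity
      have hM3 : (0:ℝ) ≤ |t| := abs_nonneg t
      linarith
    refine ⟨max 1 (M * (2/(c*K*k))), lt_of_lt_of_le one_pos (le_max_left _ _), ?_⟩
    set b := max 1 (M * (2/(c*K*k))) with hbdef
    clear_value b
    have hb0 : (0:ℝ) < b := hbdef ▸ lt_of_lt_of_le one_pos (le_max_left _ _)
    have hb1 : 1 ≤ b := hbdef ▸ le_max_left _ _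
    have hb2 : M * (2/(c*K*k)) ≤ b := hbdef ▸ le_max_right _ _
    have hck : (0:ℝ) < c*K*k := by positivity
    have hb3 : M ≤ c*K*k*b/2 := by
      rw [le_div_iff₀ (by norm_num : (0:ℝ) < 2)]
      calc M*2 = (M * (2/(c*K*k))) * (c*K*k) := by field_simp
        _ ≤ b * (c*K*k) := mul_le_mul_of_nonneg_right hb2 hck.le
        _ = c*K*k*b := by ring
    have hDb := hD b hb0
    have hwkb : wk k b ≤ k * b^2 + 1/k := wk_le hk b
    have hq1 : wk k b/(2*b) ≤ (k*b^2 + 1/k)/(2*b) :=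
      (div_le_div_iff_of_pos_right (by positivity : (0:ℝ) < 2*b)).2 hwkb
    have hq2 : (k*b^2 + 1/k)/(2*b) = k*b/2 + (1/k)/(2*b) := by
      field_simp
    have hq3 : (1/k)/(2*b) ≤ (1/k)/2 :=
      div_le_div_of_nonneg_left (by positivity) (by norm_num) (by linarith)
    have h4 : K * (wk k b/(2*b) - k*b) ≤ K * ((1/k)/2 - k*b/2) := by
      apply mul_le_mul_of_nonneg_left _ hK.le
      rw [hq2] at hq1
      linarith
    have h3 : -B ≤ -(E * incF k b - K * incE k b) := by
      have := (abs_le.1 hDb).2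
      linarith
    have h5 : c * (-B - K * ((1/k)/2 - k*b/2))
        ≤ c * (-(E * incF k b - K * incE k b) - K * (wk k b/(2*b) - k*b)) := by
      apply mul_le_mul_of_nonneg_left _ hc.le
      linarith
    have h6 : c * (-B - K * ((1/k)/2 - k*b/2))
        = -(c*B) - c*K*(1/k)/2 + c*K*k*b/2 := by ring
    have h7 : t ≤ |t| := le_abs_self t
    have h8 : t ≤ c * (-(E * incF k b - K * incE k b) - K * (wk k b/(2*b) - k*b)) := by
      rw [h6] at h5
      rw [hMdef] at hb3
      linarith
    simpa only [hFdef] using h8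
  -- intermediate value theorem
  have hsub : Set.uIcc a b ⊆ Set.Ioi (0:ℝ) := by
    intro x hx
    rcases Set.mem_uIcc.1 hx with ⟨h1, _⟩ | ⟨h1, _⟩
    · exact lt_of_lt_of_le ha0 h1
    · exact lt_of_lt_of_le hb0 h1
  have hivt := intermediate_value_uIcc (hFcont.mono hsub)
  have ht : t ∈ Set.uIcc (F a) (F b) := Set.mem_uIcc.2 (Or.inl ⟨haF, hbF⟩)
  obtain ⟨s, hs, hFs⟩ := hivt ht
  have hs0 : (0:ℝ) < s := hsub hs
  refine ⟨s, -s, ?_, ?_⟩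
  · intro h
    rw [h] at hs0
    linarith
  · rw [key s (ne_of_gt hs0), hFs]
end

section
/- Fix p > 0, k ∈ (0,1), and v ∈ ℝ. Then at every u ∈ ℝ with u ≠ v, the function u ↦ T₀(p,k,u,v) is differentiable, and its derivative D at u satisfies (π/2)·w_k(u)·(u−v)²·D = −(u−v)²·E(k) + p·K(k)·w_k(u)·w_k(v) + K(k)·(1 + u² − u·v + k²·u·v + v² + k²·u²·v²). -/
open Real

theorem stmt_7 (p k v u : ℝ) (hp : 0 < p) (hk : k ∈ Set.Ioo (0:ℝ) 1) (huv : u ≠ v) :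
    ∃ D : ℝ, HasDerivAt (fun u' => T₀ p k u' v) D u ∧
      (π/2) * wk k u * (u - v)^2 * D =
        -(u - v)^2 * ellE k + p * ellK k * wk k u * wk k v
          + ellK k * (1 + u^2 - u*v + k^2 * u * v + v^2 + k^2 * u^2 * v^2) := by
  obtain ⟨hk0, hk1⟩ := hk
  have hπ : (0:ℝ) < π := Real.pi_pos
  have hne : u - v ≠ 0 := sub_ne_zero.mpr huv
  have h1u : (0:ℝ) < 1 + u^2 := by positivity
  have h1ku : (0:ℝ) < 1 + k^2 * u^2 := by positivity
  have hApos : 0 < Real.sqrt (1 + u^2) := Real.sqrt_pos.mpr h1u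
  have hBpos : 0 < Real.sqrt (1 + k^2 * u^2) := Real.sqrt_pos.mpr h1ku
  have hA2 : Real.sqrt (1 + u^2) ^ 2 = 1 + u^2 := Real.sq_sqrt h1u.le
  have hB2 : Real.sqrt (1 + k^2 * u^2) ^ 2 = 1 + k^2 * u^2 := Real.sq_sqrt h1ku.le
  set A := Real.sqrt (1 + u^2) with hA_def
  set B := Real.sqrt (1 + k^2 * u^2) with hB_def
  have hWAB : wk k u = A * B := by
    rw [wk, hA_def, hB_def, ← Real.sqrt_mul h1u.le]
  have hWpos : 0 < wk k u := by rw [hWAB]; positivity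
  set W := wk k u with hW_def
  set wv := wk k v with hwv_def
  set K := ellK k with hK_def
  set E := ellE k with hE_def
  set g := (1 - k^2) / (A * (B + k * A)) with hg_def
  set W' := u * (1 + k^2 + 2*k^2*u^2) / W with hW'_def
  -- derivative of incF
  have hF : HasDerivAt (incF k) (1 / W) u := by
    have hc : Continuous fun t : ℝ => 1 / Real.sqrt ((1 + t^2) * (1 + k^2 * t^2)) := by
      apply continuous_const.div
      · exact (by continuity : Continuous fun t : ℝ => (1 + t^2) * (1 + k^2 * t^2)).sqrt
      · intro t; positivity
    exact intervalIntegral.integral_hasDerivAt_right (hc.intervalIntegrable 0 u)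
      (hc.stronglyMeasurableAtFilter _ _) hc.continuousAt
  -- derivative of incE
  have hEd : HasDerivAt (incE k) g u := by
    have hc : Continuous fun t : ℝ =>
        (1 - k^2) / (Real.sqrt (1 + t^2) * (Real.sqrt (1 + k^2 * t^2) + k * Real.sqrt (1 + t^2))) := by
      apply continuous_const.div
      · continuity
      · intro t
        have h1 : 0 < Real.sqrt (1 + t^2) := Real.sqrt_pos.mpr (by positivity)
        have h2 : 0 < Real.sqrt (1 + k^2 * t^2) := Real.sqrt_pos.mpr (by positivity)
        positivity
    exact intervalIntegral.integral_hasDerivAt_right (hc.intervalIntegrable 0 u)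
      (hc.stronglyMeasurableAtFilter _ _) hc.continuousAt
  -- derivative of wk
  have hWd : HasDerivAt (fun x => wk k x) W' u := by
    have h1 : HasDerivAt (fun x : ℝ => 1 + x^2) (2*u) u := by
      simpa using ((hasDerivAt_pow 2 u).const_add 1)
    have h2 : HasDerivAt (fun x : ℝ => 1 + k^2 * x^2) (k^2 * (2*u)) u := by
      simpa using (((hasDerivAt_pow 2 u).const_mul (k^2)).const_add 1)
    have h3 := (h1.mul h2).sqrt (by positivity :
      ((1 : ℝ) + u^2) * (1 + k^2 * u^2) ≠ 0)
    refine h3.congr_deriv ?_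
    rw [hW'_def, hW_def, wk]
    have hS : Real.sqrt ((1 + u^2) * (1 + k^2 * u^2)) ≠ 0 := by positivity
    simp only [Pi.mul_apply]
    field_simp
    ring
  -- derivatives of the rational pieces
  have hsub : HasDerivAt (fun u' : ℝ => u' - v) 1 u := (hasDerivAt_id u).sub_const v
  have hdiv1 : HasDerivAt (fun u' : ℝ => wv / (u' - v)) (-wv / (u - v)^2) u := by
    have h := (hasDerivAt_const u wv).div hsub hne
    exact h.congr_deriv (by ring)
  have hdiv2 : HasDerivAt (fun u' : ℝ => wk k u' / (u' - v))
      ((W' * (u - v) - W) / (u - v)^2) u := by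
    have h := hWd.div hsub hne
    exact h.congr_deriv (by rw [hW_def]; ring)
  have hlin : HasDerivAt (fun u' : ℝ => k * u') k u := by
    simpa using (hasDerivAt_id u).const_mul k
  have hinner : HasDerivAt
      (fun u' => p * (wv / (u' - v) + k * v) + (wk k u' / (u' - v) - k * u'))
      (p * (-wv / (u - v)^2) + ((W' * (u - v) - W) / (u - v)^2 - k)) u :=
    ((hdiv1.add_const (k * v)).const_mul p).add (hdiv2.sub hlin)
  have hmid : HasDerivAt (fun u' => E * incF k u' - K * incE k u')
      (E * (1 / W) - K * g) u := (hF.const_mul E).sub (hEd.const_mul K)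
  have htot : HasDerivAt
      (fun u' => p * (E * incF k v - K * incE k v)
        - (E * incF k u' - K * incE k u')
        - K * (p * (wv / (u' - v) + k * v) + (wk k u' / (u' - v) - k * u')))
      (0 - (E * (1 / W) - K * g)
        - K * (p * (-wv / (u - v)^2) + ((W' * (u - v) - W) / (u - v)^2 - k))) u :=
    ((hasDerivAt_const u _).sub hmid).sub (hinner.const_mul K)
  refine ⟨(2/π) * (0 - (E * (1 / W) - K * g)
      - K * (p * (-wv / (u - v)^2) + ((W' * (u - v) - W) / (u - v)^2 - k))), ?_, ?_⟩
  · have := htot.const_mul (2/π)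
    exact this
  · -- algebraic identity
    have hgW : g * W = 1 + k^2 * u^2 - k * W := by
      rw [hg_def, hWAB]
      have hden : A * (B + k * A) ≠ 0 := by positivity
      rw [div_mul_eq_mul_div, div_eq_iff hden]
      linear_combination (k * A^2) * hB2 + (k^2 * A * B) * hA2
    have hW'W : W' * W = u * (1 + k^2 + 2*k^2*u^2) := by
      rw [hW'_def]
      field_simp
    have hW2 : W^2 = (1 + u^2) * (1 + k^2 * u^2) := by
      rw [hW_def, wk]
      exact Real.sq_sqrt (by positivity)
    have hπ' : (π:ℝ) ≠ 0 := hπ.ne'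
    have hW0 : W ≠ 0 := hWpos.ne'
    have key : (π/2) * W * (u - v)^2 *
        ((2/π) * (0 - (E * (1 / W) - K * g)
          - K * (p * (-wv / (u - v)^2) + ((W' * (u - v) - W) / (u - v)^2 - k))))
        = -(u - v)^2 * E + K * (g * W) * (u - v)^2 + K * p * wv * W
          - K * (W' * W) * (u - v) + K * W^2 + K * k * W * (u - v)^2 := by
      field_simp
      ring
    rw [key, hgW, hW'W, hW2]
    ring
end

section
/- Fix x > 0 and δ ∈ (0,π), and let κ₁ = (π/4)·(1 − i/x) and κ₂ = −(π/4)·(1 + i/x). Then for every w ∈ ℂ, g(w) equals the identity matrix if and only if w = a·κ₁ + b·κ₂ for some integers a and b; that is, the lattice of periods of g is exactly ℤκ₁ + ℤκ₂. -/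
open Complex Real Matrix

/-- The matrix X. -/
noncomputable def matX : Matrix (Fin 2) (Fin 2) ℂ := !![0, 1; -1, 0]

/-- The matrix Y with parameters x, δ. -/
noncomputable def matY (x δ : ℝ) : Matrix (Fin 2) (Fin 2) ℂ :=
  (x : ℂ) • !![0, Complex.exp (Complex.I * δ); -Complex.exp (-(Complex.I * δ)), 0]

/-- The homogeneous harmonic map g. -/
noncomputable def gmap (x δ : ℝ) (w : ℂ) : Matrix (Fin 2) (Fin 2) ℂ :=
  NormedSpace.exp ((((-4) * w.re : ℝ) : ℂ) • matX) *
    NormedSpace.exp (((4 * w.im : ℝ) : ℂ) • matY x δ)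

lemma exp_smul_sq_neg_one {A : Matrix (Fin 2) (Fin 2) ℂ} (hA : A * A = -1) (c : ℂ) :
    NormedSpace.exp (c • A) = Complex.cos c • 1 + Complex.sin c • A := by
  have hA2 : A ^ 2 = -1 := by rwa [sq]
  have heven : ∀ k : ℕ, (c • A) ^ (2 * k) = ((-1 : ℂ) ^ k * c ^ (2 * k)) • 1 := by
    intro k
    have hAk : A ^ (2 * k) = ((-1 : ℂ) ^ k) • 1 := by
      rw [pow_mul, hA2, show ((-1 : Matrix (Fin 2) (Fin 2) ℂ)) = ((-1 : ℂ) • 1) by simp,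
        smul_pow, one_pow]
    rw [smul_pow, hAk, smul_smul, mul_comm]
  have hodd : ∀ k : ℕ, (c • A) ^ (2 * k + 1) = ((-1 : ℂ) ^ k * c ^ (2 * k + 1)) • A := by
    intro k
    rw [pow_succ, heven, smul_mul_assoc, one_mul, smul_smul, mul_assoc, ← pow_succ]
  rw [NormedSpace.exp_eq_tsum (𝕂 := ℂ)]
  refine HasSum.tsum_eq (HasSum.even_add_odd ?_ ?_)
  · have h := (Complex.hasSum_cos c).smul_const (1 : Matrix (Fin 2) (Fin 2) ℂ)
    convert h using 1
    · rfl
    funext k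
    rw [heven, smul_smul]
    congr 1
    field_simp
  · have h := (Complex.hasSum_sin c).smul_const A
    convert h using 1
    · rfl
    funext k
    rw [hodd, smul_smul]
    congr 1
    field_simp

lemma matX_sq : matX * matX = -1 := by
  ext i j
  fin_cases i <;> fin_cases j <;>
    simp [matX, Matrix.mul_apply, Fin.sum_univ_two, Matrix.one_apply]

/-- The inner matrix of Y. -/
noncomputable def matM (δ : ℝ) : Matrix (Fin 2) (Fin 2) ℂ :=
  !![0, Complex.exp (Complex.I * δ); -Complex.exp (-(Complex.I * δ)), 0]

lemma matM_sq (δ : ℝ) : matM δ * matM δ = -1 := by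
  have h : Complex.exp (Complex.I * δ) * Complex.exp (-(Complex.I * δ)) = 1 := by
    rw [← Complex.exp_add]; simp
  have h' : Complex.exp (-(Complex.I * δ)) * Complex.exp (Complex.I * δ) = 1 := by
    rw [← Complex.exp_add]; simp
  ext i j
  fin_cases i <;> fin_cases j <;>
    simp [matM, Matrix.mul_apply, Fin.sum_univ_two, Matrix.one_apply, h, h']

lemma hEF (δ : ℝ) :
    Complex.exp (Complex.I * δ) - Complex.exp (-(Complex.I * δ))
      = 2 * Complex.I * Complex.sin δ := by
  rw [Complex.sin]
  ring_nf
  rw [Complex.I_sq]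
  ring_nf

lemma exp_cX (c : ℂ) : NormedSpace.exp (c • matX)
    = !![Complex.cos c, Complex.sin c; -Complex.sin c, Complex.cos c] := by
  rw [exp_smul_sq_neg_one matX_sq]
  ext i j
  fin_cases i <;> fin_cases j <;> simp [matX, Matrix.one_apply]

lemma exp_cY (x δ : ℝ) (c : ℂ) : NormedSpace.exp (c • matY x δ)
    = !![Complex.cos (c * x), Complex.sin (c * x) * Complex.exp (Complex.I * δ);
        -(Complex.sin (c * x) * Complex.exp (-(Complex.I * δ))), Complex.cos (c * x)] := by
  have h : c • matY x δ = (c * x) • matM δ := by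
    rw [matY, matM, smul_smul]
  rw [h, exp_smul_sq_neg_one (matM_sq δ)]
  ext i j
  fin_cases i <;> fin_cases j <;> simp [matM, Matrix.one_apply]

lemma gmap_formula (x δ : ℝ) (w : ℂ) :
    gmap x δ w =
      !![Complex.cos ((-4)*w.re : ℝ), Complex.sin ((-4)*w.re : ℝ);
         -Complex.sin ((-4)*w.re : ℝ), Complex.cos ((-4)*w.re : ℝ)] *
      !![Complex.cos (4*w.im*x : ℝ), Complex.sin (4*w.im*x : ℝ) * Complex.exp (Complex.I * δ);
        -(Complex.sin (4*w.im*x : ℝ) * Complex.exp (-(Complex.I * δ))),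
          Complex.cos (4*w.im*x : ℝ)] := by
  rw [gmap, exp_cX, exp_cY, ← Complex.ofReal_mul]

lemma gmap_eq_one_iff (x δ : ℝ) (hδ : δ ∈ Set.Ioo (0:ℝ) π) (w : ℂ) :
    gmap x δ w = 1 ↔
      ∃ m k : ℤ, (m : ℝ) * π = (-4)*w.re ∧ (k : ℝ) * (2*π) = (-4)*w.re - 4*w.im*x := by
  set u : ℝ := (-4)*w.re with hu
  set v : ℝ := 4*w.im*x with hv
  have hEFne : Complex.exp (Complex.I * δ) - Complex.exp (-(Complex.I * δ)) ≠ 0 := by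
    rw [hEF]
    have hs : Real.sin δ ≠ 0 :=
      ne_of_gt (Real.sin_pos_of_pos_of_lt_pi hδ.1 hδ.2)
    have hs' : Complex.sin (δ : ℂ) ≠ 0 := by
      rw [← Complex.ofReal_sin]; exact_mod_cast hs
    exact mul_ne_zero (mul_ne_zero two_ne_zero Complex.I_ne_zero) hs'
  constructor
  · intro h
    rw [gmap_formula, Matrix.mul_fin_two, Matrix.one_fin_two] at h
    have h00 := congrFun (congrFun h 0) 0
    have h01 := congrFun (congrFun h 0) 1
    have h10 := congrFun (congrFun h 1) 0
    have h11 := congrFun (congrFun h 1) 1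
    simp only [Matrix.cons_val', Matrix.cons_val_zero, Matrix.cons_val_one, Matrix.head_cons,
      Matrix.empty_val', Matrix.cons_val_fin_one, Matrix.head_fin_const,
      Matrix.of_apply] at h00 h01 h10 h11
    set cu := Complex.cos (u : ℂ)
    set su := Complex.sin (u : ℂ)
    set cv := Complex.cos (v : ℂ)
    set sv := Complex.sin (v : ℂ)
    set E := Complex.exp (Complex.I * δ)
    set F := Complex.exp (-(Complex.I * δ))
    have hced : cu * sv * (E - F) = 0 := by linear_combination h01 + h10
    have hsed : su * sv * (E - F) = 0 := by linear_combination h00 - h11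
    have hcs : cu * sv = 0 := (mul_eq_zero.mp hced).resolve_right hEFne
    have hss : su * sv = 0 := (mul_eq_zero.mp hsed).resolve_right hEFne
    have pyth : su ^ 2 + cu ^ 2 = 1 := Complex.sin_sq_add_cos_sq _
    have hsv : sv = 0 := by linear_combination cu * hcs + su * hss - sv * pyth
    have hsc : su * cv = 0 := by rw [hsv] at h01; simpa using h01
    have hcc : cu * cv = 1 := by rw [hsv] at h00; simpa using h00
    have hcv0 : cv ≠ 0 := by intro h0; rw [h0, mul_zero] at hcc; exact one_ne_zero hcc.symm
    have hsu : su = 0 := (mul_eq_zero.mp hsc).resolve_right hcv0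
    have hsuR : Real.sin u = 0 := by
      have : ((Real.sin u : ℝ) : ℂ) = 0 := by rw [Complex.ofReal_sin]; exact hsu
      exact_mod_cast this
    have hccR : Real.cos u * Real.cos v = 1 := by
      have : ((Real.cos u * Real.cos v : ℝ) : ℂ) = 1 := by
        push_cast [Complex.ofReal_cos]; exact hcc
      exact_mod_cast this
    obtain ⟨m, hm⟩ := Real.sin_eq_zero_iff.mp hsuR
    have hcsub : Real.cos (u - v) = 1 := by
      rw [Real.cos_sub, hsuR]; linarith [hccR]
    obtain ⟨k, hk⟩ := (Real.cos_eq_one_iff _).mp hcsub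
    exact ⟨m, k, hm, hk⟩
  · rintro ⟨m, k, hm, hk⟩
    have hsuR : Real.sin u = 0 := by rw [← hm]; exact Real.sin_int_mul_pi m
    have hsvR : Real.sin v = 0 := by
      have h' : v = ((m - 2*k : ℤ) : ℝ) * π := by push_cast; linarith
      rw [h']; exact Real.sin_int_mul_pi _
    have hcvR : Real.cos v = Real.cos u := by
      have h' : v = u - (k:ℝ) * (2*π) := by linarith
      rw [h', Real.cos_sub]
      have h2k : Real.sin ((k:ℝ)*(2*π)) = 0 := by
        have h'' : (k:ℝ)*(2*π) = ((2*k : ℤ) : ℝ) * π := by push_cast; ring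
        rw [h'']; exact Real.sin_int_mul_pi _
      have h2kc : Real.cos ((k:ℝ)*(2*π)) = 1 := Real.cos_int_mul_two_pi k
      rw [h2k, h2kc]; ring
    have hccR : Real.cos u * Real.cos v = 1 := by
      rw [hcvR]
      have := Real.sin_sq_add_cos_sq u
      nlinarith [hsuR]
    have hsu : Complex.sin (u : ℂ) = 0 := by rw [← Complex.ofReal_sin, hsuR]; simp
    have hsv : Complex.sin (v : ℂ) = 0 := by rw [← Complex.ofReal_sin, hsvR]; simp
    have hcc : Complex.cos (u : ℂ) * Complex.cos (v : ℂ) = 1 := by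
      rw [← Complex.ofReal_cos, ← Complex.ofReal_cos]
      exact_mod_cast hccR
    rw [gmap_formula, Matrix.mul_fin_two, Matrix.one_fin_two, hsu, hsv]
    simp only [zero_mul, mul_zero, neg_zero, zero_add, add_zero, zero_sub, neg_neg]
    rw [hcc]

lemma lat_re_im (x : ℝ) (hx : x ≠ 0) (a b : ℤ) :
    ((a : ℂ) * ((π/4 : ℝ) * (1 - Complex.I / x))
        + (b : ℂ) * (-((π/4 : ℝ) * (1 + Complex.I / x)))).re = ((a:ℝ)-b)*(π/4) ∧
    ((a : ℂ) * ((π/4 : ℝ) * (1 - Complex.I / x))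
        + (b : ℂ) * (-((π/4 : ℝ) * (1 + Complex.I / x)))).im = -((a:ℝ)+b)*(π/(4*x)) := by
  have hI : Complex.I / (x : ℂ) = ((x⁻¹ : ℝ) : ℂ) * Complex.I := by
    push_cast; ring
  rw [hI]
  constructor <;>
    · simp [Complex.add_re, Complex.add_im, Complex.mul_re, Complex.mul_im]
      field_simp
      ring

theorem stmt_14 (x δ : ℝ) (hx : 0 < x) (hδ : δ ∈ Set.Ioo (0:ℝ) π) :
    ∀ w : ℂ, gmap x δ w = 1 ↔
      ∃ a b : ℤ, w = (a : ℂ) * ((π/4 : ℝ) * (1 - Complex.I / x))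
        + (b : ℂ) * (-((π/4 : ℝ) * (1 + Complex.I / x))) := by
  intro w
  have hx0 : x ≠ 0 := ne_of_gt hx
  rw [gmap_eq_one_iff x δ hδ w]
  constructor
  · rintro ⟨m, k, hm, hk⟩
    refine ⟨k - m, k, ?_⟩
    obtain ⟨hre, him⟩ := lat_re_im x hx0 (k - m) k
    have hπ : (0:ℝ) < π := Real.pi_pos
    apply Complex.ext
    · rw [hre]; push_cast; linarith
    · rw [him]; push_cast
      have h4 : 4 * w.im * x = (m:ℝ) * π - (k:ℝ) * (2*π) := by linarith
      field_simp
      linarith [h4]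
  · rintro ⟨a, b, hw⟩
    obtain ⟨hre, him⟩ := lat_re_im x hx0 a b
    refine ⟨b - a, b, ?_, ?_⟩
    · rw [hw, hre]; push_cast; ring
    · rw [hw, hre, him]; field_simp; ring
end

section
/- Let a, b, c be real numbers, not all zero, let Z be the 2×2 complex matrix !![i·a, b + i·c; −b + i·c, −i·a], and let r = √(a² + b² + c²). Then the matrix exponential satisfies exp(Z) = cos(r)·1 + (sin(r)/r)·Z, where 1 is the 2×2 identity matrix. -/
open Complex Matrix

theorem stmt_15 (a b c : ℝ) (h : ¬(a = 0 ∧ b = 0 ∧ c = 0)) :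
    let Z : Matrix (Fin 2) (Fin 2) ℂ :=
      !![Complex.I * a, (b : ℂ) + Complex.I * c; -(b : ℂ) + Complex.I * c, -(Complex.I * a)]
    let r : ℝ := Real.sqrt (a^2 + b^2 + c^2)
    NormedSpace.exp Z
      = ((Real.cos r : ℂ)) • (1 : Matrix (Fin 2) (Fin 2) ℂ)
        + ((Real.sin r / r : ℝ) : ℂ) • Z := by
  intro Z r
  letI : SeminormedRing (Matrix (Fin 2) (Fin 2) ℂ) := Matrix.linftyOpSemiNormedRing
  letI : NormedRing (Matrix (Fin 2) (Fin 2) ℂ) := Matrix.linftyOpNormedRing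
  letI : NormedAlgebra ℝ (Matrix (Fin 2) (Fin 2) ℂ) := Matrix.linftyOpNormedAlgebra
  have hs : 0 < a^2 + b^2 + c^2 := by
    rcases not_and_or.mp h with ha | h'
    · positivity
    rcases not_and_or.mp h' with hb | hc
    · positivity
    · positivity
  have hr : 0 < r := Real.sqrt_pos.mpr hs
  have hr2 : r ^ 2 = a^2 + b^2 + c^2 := Real.sq_sqrt hs.le
  have hrC : (r : ℂ) ≠ 0 := by exact_mod_cast hr.ne'
  set W : Matrix (Fin 2) (Fin 2) ℂ := ((r : ℂ))⁻¹ • Z with hW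
  have hZ2 : Z * Z = -((r:ℂ)^2 • 1) := by
    have hc2 : ((r:ℂ))^2 = (a:ℂ)^2 + b^2 + c^2 := by exact_mod_cast hr2
    rw [hc2]
    show Z * Z = _
    simp only [Z]
    ext i j
    fin_cases i <;> fin_cases j <;>
      simp [Matrix.mul_apply, Fin.sum_univ_succ, Matrix.one_apply] <;>
      ring_nf <;> simp only [Complex.I_sq] <;> ring
  have hWW : W * W = -1 := by
    rw [hW, Matrix.smul_mul, Matrix.mul_smul, hZ2, smul_neg, smul_smul, smul_neg, smul_smul]
    rw [show ((r:ℂ))⁻¹ * (((r:ℂ))⁻¹ * (r:ℂ)^2) = 1 by field_simp, one_smul]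
  set φ : ℂ →ₐ[ℝ] Matrix (Fin 2) (Fin 2) ℂ := Complex.liftAux W hWW with hφ
  have hφcont : Continuous φ := φ.toLinearMap.continuous_of_finiteDimensional
  have hφI : φ ((r : ℂ) * Complex.I) = Z := by
    rw [_root_.map_mul, Complex.liftAux_apply_I, hW]
    rw [show φ ((r : ℂ)) = algebraMap ℝ (Matrix (Fin 2) (Fin 2) ℂ) r from φ.commutes r]
    rw [Algebra.algebraMap_eq_smul_one, Matrix.smul_mul, Matrix.one_mul]
    rw [smul_comm, ← Complex.coe_smul, smul_smul, inv_mul_cancel₀ hrC, one_smul]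
  have key2 : NormedSpace.exp (φ ((r:ℂ) * Complex.I)) =
      φ (NormedSpace.exp ((r:ℂ) * Complex.I)) :=
    (NormedSpace.map_exp φ hφcont _).symm
  have hexpℂ : NormedSpace.exp ((r:ℂ) * Complex.I) = Complex.exp ((r:ℂ) * Complex.I) := by
    rw [← Complex.exp_eq_exp_ℂ]
  have hmul : Complex.exp ((r:ℂ) * Complex.I)
      = (Real.cos r : ℂ) + (Real.sin r : ℂ) * Complex.I := by
    rw [Complex.exp_mul_I]; norm_cast
  have hexpRC : NormedSpace.exp Z = NormedSpace.exp Z :=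
    rfl
  rw [← hexpRC, ← hφI, key2, hexpℂ, hmul]
  rw [hφI, map_add, _root_.map_mul, Complex.liftAux_apply_I]
  have h1 : φ ((Real.cos r : ℂ)) = (Real.cos r : ℂ) • 1 := by
    rw [show φ ((Real.cos r : ℂ)) = algebraMap ℝ _ (Real.cos r) from φ.commutes _,
      Algebra.algebraMap_eq_smul_one, Complex.coe_smul]
  have h2 : φ ((Real.sin r : ℂ)) = (Real.sin r : ℂ) • 1 := by
    rw [show φ ((Real.sin r : ℂ)) = algebraMap ℝ _ (Real.sin r) from φ.commutes _,
      Algebra.algebraMap_eq_smul_one, Complex.coe_smul]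
  rw [h1, h2, hW, Matrix.smul_mul, Matrix.one_mul, smul_smul]
  congr 1
  push_cast
  rw [div_eq_mul_inv]
end
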